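/- arXiv:2302.14351 — 7 statements merged into one kernel-verified Lean document; each statement's English description precedes it below -/
import Mathlib

section
/- Let [X,B,m,ν] be a reversible random walk space and let Ω ∈ B be such that Ω and Ω_m are m-connected and 0 < ν(Ω) < ν(Ω_m) < ∞. Then 0 < P_m(Ω) < ν(Ω). -/
open MeasureTheory ENNReal Filter Topology

namespace RandomWalkSpace

variable {X : Type*} [MeasurableSpace X]

/-- A random walk: a family of probability measures `m x`, measurably depending on `x`. -/
def IsRandomWalk (m : X → Measure X) : Prop :=
  (∀ x, IsProbabilityMeasure (m x)) ∧
    ∀ A : Set X, MeasurableSet A → Measurable fun x => m x A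

/-- Reversibility (detailed balance) of `ν` with respect to the random walk `m`. -/
def Reversible (m : X → Measure X) (ν : Measure X) : Prop :=
  ∀ A B : Set X, MeasurableSet A → MeasurableSet B →
    ∫⁻ x in A, m x B ∂ν = ∫⁻ x in B, m x A ∂ν

/-- The `m`-boundary of `Ω`. -/
def mBoundary (m : X → Measure X) (Ω : Set X) : Set X :=
  {x | x ∉ Ω ∧ 0 < m x Ω}

/-- The `m`-closure of `Ω`. -/
def mClosure (m : X → Measure X) (Ω : Set X) : Set X :=
  Ω ∪ mBoundary m Ω

/-- `D` is `m`-connected (with respect to `ν`). -/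
def mConnected (m : X → Measure X) (ν : Measure X) (D : Set X) : Prop :=
  ∀ A B : Set X, MeasurableSet A → MeasurableSet B → A ⊆ D → B ⊆ D →
    A ∪ B = D → 0 < ν A → 0 < ν B → 0 < ∫⁻ x in A, m x B ∂ν

/-- The `m`-perimeter of `Ω`. -/
noncomputable def mPerimeter (m : X → Measure X) (ν : Measure X) (Ω : Set X) : ℝ≥0∞ :=
  ∫⁻ x in Ω, m x Ωᶜ ∂ν

/-- `survival m Ω n x` is the mass of paths of `n` jumps starting at `x` that stay in `Ω`. -/
noncomputable def survival (m : X → Measure X) (Ω : Set X) : ℕ → X → ℝ≥0∞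
  | 0, _ => 1
  | n + 1, x => ∫⁻ y in Ω, survival m Ω n y ∂(m x)

/-- `gseq m ν Ω n` is the mass of paths of `n` jumps that start in `Ω` and stay in `Ω`. -/
noncomputable def gseq (m : X → Measure X) (ν : Measure X) (Ω : Set X) (n : ℕ) : ℝ≥0∞ :=
  ∫⁻ x in Ω, survival m Ω n x ∂ν

/-- The spectral `m`-heat content of `Ω` at time `t`. -/
noncomputable def heatContent (m : X → Measure X) (ν : Measure X) (Ω : Set X) (t : ℝ) : ℝ≥0∞ :=
  ∑' k : ℕ, gseq m ν Ω k * ENNReal.ofReal (Real.exp (-t) * t ^ k / (Nat.factorial k))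

/-- The nonlocal `p`-energy `∫_{Ω_m×Ω_m} |f(y) − f(x)|^p dm_x(y)dν(x)`. -/
noncomputable def energy (m : X → Measure X) (ν : Measure X) (Ω : Set X) (p : ℝ)
    (f : X → ℝ) : ℝ≥0∞ :=
  ∫⁻ x in mClosure m Ω, ∫⁻ y in mClosure m Ω, ENNReal.ofReal (|f y - f x| ^ p) ∂(m x) ∂ν

/-- `f ∈ L^p_0(Ω_m,ν)`: `f ∈ L^p(Ω_m,ν)` and `f = 0` ν-a.e. on `∂_m Ω`. -/
def InLp0 (m : X → Measure X) (ν : Measure X) (Ω : Set X) (p : ℝ) (f : X → ℝ) : Prop :=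
  MemLp f (ENNReal.ofReal p) (ν.restrict (mClosure m Ω)) ∧
    ∀ᵐ x ∂ν.restrict (mBoundary m Ω), f x = 0

/-- `Ω` satisfies a `p`-Poincaré inequality. -/
def PoincareInequality (m : X → Measure X) (ν : Measure X) (Ω : Set X) (p : ℝ) : Prop :=
  ∃ lam : ℝ, 0 < lam ∧ ∀ f : X → ℝ, InLp0 m ν Ω p f →
    ENNReal.ofReal lam * ∫⁻ x in Ω, ENNReal.ofReal (|f x| ^ p) ∂ν ≤ energy m ν Ω p f

/-- The `m`-stress function of `Ω`. -/
def IsStressFunction (m : X → Measure X) (ν : Measure X) (Ω : Set X) (f : X → ℝ) : Prop :=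
  InLp0 m ν Ω 2 f ∧ (∀ᵐ x ∂ν.restrict (mClosure m Ω), 0 ≤ f x) ∧
    ∀ᵐ x ∂ν.restrict Ω, -∫ y in mClosure m Ω, (f y - f x) ∂(m x) = 1

/-- The `p`-torsion function of `Ω`. -/
def IsPStressFunction (m : X → Measure X) (ν : Measure X) (Ω : Set X) (p : ℝ)
    (f : X → ℝ) : Prop :=
  InLp0 m ν Ω p f ∧ (∀ᵐ x ∂ν.restrict (mClosure m Ω), 0 ≤ f x) ∧
    ∀ᵐ x ∂ν.restrict Ω,
      -∫ y in mClosure m Ω, |f y - f x| ^ (p - 2) * (f y - f x) ∂(m x) = 1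

/-- The Rayleigh quotient infimum `λ_{m,p}(Ω)`. -/
noncomputable def rayleigh (m : X → Measure X) (ν : Measure X) (Ω : Set X) (p : ℝ) : ℝ≥0∞ :=
  ⨅ (f : X → ℝ) (_ : InLp0 m ν Ω p f)
    (_ : 0 < ∫⁻ x in Ω, ENNReal.ofReal (|f x| ^ p) ∂ν),
    (energy m ν Ω p f / 2) / ∫⁻ x in Ω, ENNReal.ofReal (|f x| ^ p) ∂ν

/-- The `m`-Cheeger constant `h_1^m(Ω)`. -/
noncomputable def cheeger1 (m : X → Measure X) (ν : Measure X) (Ω : Set X) : ℝ≥0∞ :=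
  ⨅ (E : Set X) (_ : MeasurableSet E) (_ : E ⊆ Ω) (_ : 0 < ν E),
    mPerimeter m ν E / ν E

/-- The `m`-`p`-Cheeger constant `h_p^m(Ω)`. -/
noncomputable def cheegerP (m : X → Measure X) (ν : Measure X) (Ω : Set X) (p : ℝ) : ℝ≥0∞ :=
  ⨅ (E : Set X) (_ : MeasurableSet E) (_ : E ⊆ Ω) (_ : 0 < ν E),
    mPerimeter m ν E / ν E ^ p

/-- The functional `F_{m,p}(f) = (1/(2p)) ∫∫ |∇f|^p − ∫_Ω f`, with values in `EReal`. -/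
noncomputable def torsionalFunctional (m : X → Measure X) (ν : Measure X) (Ω : Set X)
    (p : ℝ) (f : X → ℝ) : EReal :=
  ((energy m ν Ω p f / ENNReal.ofReal (2 * p) : ℝ≥0∞) : EReal) -
    ((∫ x in Ω, f x ∂ν : ℝ) : EReal)

end RandomWalkSpace
/-- In a reversible random walk space, if `Ω` and `Ω_m` are `m`-connected and
`0 < ν(Ω) < ν(Ω_m) < ∞`, then `0 < P_m(Ω) < ν(Ω)`. -/
theorem perimeter_pos_lt {X : Type*} [MeasurableSpace X]
    (m : X → Measure X) (ν : Measure X) [SigmaFinite ν]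
    (hm : RandomWalkSpace.IsRandomWalk m) (hrev : RandomWalkSpace.Reversible m ν)
    (Ω : Set X) (hΩ : MeasurableSet Ω)
    (hconn : RandomWalkSpace.mConnected m ν Ω)
    (hconnm : RandomWalkSpace.mConnected m ν (RandomWalkSpace.mClosure m Ω))
    (h0 : 0 < ν Ω) (h1 : ν Ω < ν (RandomWalkSpace.mClosure m Ω))
    (h2 : ν (RandomWalkSpace.mClosure m Ω) < ⊤) :
    0 < RandomWalkSpace.mPerimeter m ν Ω ∧ RandomWalkSpace.mPerimeter m ν Ω < ν Ω := by
  classical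
  obtain ⟨hprob, hmeas⟩ := hm
  have hmeasΩ : Measurable fun x => m x Ω := hmeas Ω hΩ
  have hbd_meas : MeasurableSet (RandomWalkSpace.mBoundary m Ω) := by
    have : RandomWalkSpace.mBoundary m Ω
        = Ωᶜ ∩ ((fun x => m x Ω) ⁻¹' Set.Ioi 0) := by
      ext x
      simp only [RandomWalkSpace.mBoundary, Set.mem_setOf_eq, Set.mem_inter_iff,
        Set.mem_compl_iff, Set.mem_preimage, Set.mem_Ioi]
    rw [this]
    exact hΩ.compl.inter (hmeasΩ measurableSet_Ioi)
  have hcl_meas : MeasurableSet (RandomWalkSpace.mClosure m Ω) := hΩ.union hbd_meas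
  have hdisj : Disjoint Ω (RandomWalkSpace.mBoundary m Ω) := by
    rw [Set.disjoint_left]; intro x hx hx'; exact hx'.1 hx
  have hcl : ν (RandomWalkSpace.mClosure m Ω)
      = ν Ω + ν (RandomWalkSpace.mBoundary m Ω) :=
    measure_union hdisj hbd_meas
  have hΩfin : ν Ω < ⊤ := lt_of_lt_of_le h1 h2.le
  have hbd_pos : 0 < ν (RandomWalkSpace.mBoundary m Ω) := by
    by_contra h
    push_neg at h
    have : ν (RandomWalkSpace.mBoundary m Ω) = 0 := le_antisymm h (zero_le)
    rw [hcl, this, add_zero] at h1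
    exact lt_irrefl _ h1
  have hbd_sub : RandomWalkSpace.mBoundary m Ω ⊆ Ωᶜ := fun x hx => hx.1
  -- Lower bound
  have hpos : 0 < RandomWalkSpace.mPerimeter m ν Ω := by
    have key := hconnm Ω (RandomWalkSpace.mBoundary m Ω) hΩ hbd_meas
      (Set.subset_union_left) (Set.subset_union_right) rfl h0 hbd_pos
    refine lt_of_lt_of_le key ?_
    exact lintegral_mono fun x => measure_mono hbd_sub
  refine ⟨hpos, ?_⟩
  -- Upper bound
  have hIpos : 0 < ∫⁻ x in Ω, m x Ω ∂ν :=
    hconn Ω Ω hΩ hΩ (le_refl _) (le_refl _) (Set.union_self Ω) h0 h0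
  have hsum : RandomWalkSpace.mPerimeter m ν Ω + ∫⁻ x in Ω, m x Ω ∂ν = ν Ω := by
    rw [RandomWalkSpace.mPerimeter, ← lintegral_add_left (hmeas Ωᶜ hΩ.compl)]
    have : ∀ x, m x Ωᶜ + m x Ω = 1 := fun x => by
      have := hprob x
      rw [add_comm, measure_add_measure_compl hΩ, measure_univ]
    simp only [this]
    simp [Measure.restrict_apply_univ]
  have hPle : RandomWalkSpace.mPerimeter m ν Ω ≤ ν Ω := by
    rw [← hsum]; exact le_self_add
  have hPfin : RandomWalkSpace.mPerimeter m ν Ω ≠ ⊤ :=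
    (lt_of_le_of_lt hPle hΩfin).ne
  calc RandomWalkSpace.mPerimeter m ν Ω
      < RandomWalkSpace.mPerimeter m ν Ω + ∫⁻ x in Ω, m x Ω ∂ν :=
        ENNReal.lt_add_right hPfin hIpos.ne'
    _ = ν Ω := hsum
end

section
/- Let [X,B,m,ν] be a reversible random walk space and let Ω ∈ B with Ω and Ω_m m-connected and 0 < ν(Ω) < ν(Ω_m) < ∞. If f_Ω is the m-stress function of Ω, then the m-torsional rigidity satisfies T_m(Ω) = ∫_Ω f_Ω dν ≥ ν(Ω). -/
open MeasureTheory ENNReal Filter Topology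

section AuxLemmas

open RandomWalkSpace

variable {X : Type*} [MeasurableSpace X] {m : X → Measure X} {ν : Measure X}

lemma aux_measurable_restrict (hm : IsRandomWalk m) {B : Set X} (hB : MeasurableSet B) :
    Measurable fun x => (m x).restrict B := by
  apply Measure.measurable_of_measurable_coe
  intro s hs
  simp only [Measure.restrict_apply hs]
  exact hm.2 (s ∩ B) (hs.inter hB)

lemma aux_swap (hm : IsRandomWalk m) (hrev : Reversible m ν)
    {A B : Set X} (hA : MeasurableSet A) (hB : MeasurableSet B)
    {g : X → ℝ≥0∞} (hg : Measurable g) :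
    ∫⁻ x in A, ∫⁻ y in B, g y ∂(m x) ∂ν = ∫⁻ y in B, g y * m y A ∂ν := by
  have hker : Measurable fun x => (m x).restrict B := aux_measurable_restrict hm hB
  have hmA : Measurable fun y => m y A := hm.2 A hA
  have h1 : (ν.restrict A).bind (fun x => (m x).restrict B)
      = (ν.restrict B).withDensity (fun y => m y A) := by
    ext s hs
    rw [Measure.bind_apply hs hker.aemeasurable, withDensity_apply _ hs,
      Measure.restrict_restrict hs]
    simp only [Measure.restrict_apply hs]
    exact (hrev A (s ∩ B) hA (hs.inter hB)).trans rfl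
  calc ∫⁻ x in A, ∫⁻ y in B, g y ∂(m x) ∂ν
      = ∫⁻ y, g y ∂((ν.restrict A).bind fun x => (m x).restrict B) :=
        (Measure.lintegral_bind hker.aemeasurable hg.aemeasurable).symm
    _ = ∫⁻ y in B, g y * m y A ∂ν := by
        rw [h1, lintegral_withDensity_eq_lintegral_mul _ hmA hg]
        simp only [Pi.mul_apply]
        exact lintegral_congr fun y => mul_comm _ _

lemma aux_null_transfer (hm : IsRandomWalk m) (hrev : Reversible m ν)
    {S : Set X} (hS : MeasurableSet S) (hS0 : ν S = 0) :
    ∀ᵐ x ∂ν, m x S = 0 := by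
  have h : ∫⁻ x, m x S ∂ν = 0 := by
    have h1 := hrev Set.univ S MeasurableSet.univ hS
    rw [Measure.restrict_univ] at h1
    rw [h1]
    have : ∀ y, m y Set.univ = 1 := fun y => (hm.1 y).measure_univ
    calc ∫⁻ y in S, m y Set.univ ∂ν = ∫⁻ _ in S, 1 ∂ν := by simp_rw [this]
      _ = ν S := setLIntegral_one S
      _ = 0 := hS0
  exact (lintegral_eq_zero_iff (hm.2 S hS)).mp h

end AuxLemmas
/-- the `m`-torsional rigidity `T_m(Ω) = ∫_Ω f_Ω dν` satisfies `T_m(Ω) ≥ ν(Ω)`. -/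
theorem torsion_ge_measure {X : Type*} [MeasurableSpace X]
    (m : X → Measure X) (ν : Measure X) [SigmaFinite ν]
    (hm : RandomWalkSpace.IsRandomWalk m) (hrev : RandomWalkSpace.Reversible m ν)
    (Ω : Set X) (hΩ : MeasurableSet Ω)
    (hconn : RandomWalkSpace.mConnected m ν Ω)
    (hconnm : RandomWalkSpace.mConnected m ν (RandomWalkSpace.mClosure m Ω))
    (h0 : 0 < ν Ω) (h1 : ν Ω < ν (RandomWalkSpace.mClosure m Ω))
    (h2 : ν (RandomWalkSpace.mClosure m Ω) < ⊤)
    (f : X → ℝ) (hf : RandomWalkSpace.IsStressFunction m ν Ω f) :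
    (ν Ω).toReal ≤ ∫ x in Ω, f x ∂ν := by
  classical
  set C := RandomWalkSpace.mClosure m Ω with hCdef
  set D := RandomWalkSpace.mBoundary m Ω with hDdef
  have hD : MeasurableSet D := by
    have : D = Ωᶜ ∩ {x | 0 < m x Ω} := rfl
    rw [this]
    exact hΩ.compl.inter (measurableSet_lt measurable_const (hm.2 Ω hΩ))
  have hC : MeasurableSet C := hΩ.union hD
  have hΩC : Ω ⊆ C := Set.subset_union_left
  have hdisj : Disjoint Ω D := Set.disjoint_left.mpr fun x hx hxD => hxD.1 hx
  have hDC : D ⊆ C := Set.subset_union_right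
  haveI : IsFiniteMeasure (ν.restrict C) :=
    ⟨by rwa [Measure.restrict_apply_univ]⟩
  haveI hprob : ∀ x, IsProbabilityMeasure (m x) := hm.1
  -- integrability of f on C
  have hf2 : MemLp f 2 (ν.restrict C) := by
    have := hf.1.1
    rwa [show ENNReal.ofReal 2 = (2 : ℝ≥0∞) by norm_num] at this
  have hfi : Integrable f (ν.restrict C) :=
    memLp_one_iff_integrable.mp (hf2.mono_exponent one_le_two)
  -- measurable representative
  have hfm := hf.1.1.aestronglyMeasurable
  set f' := hfm.mk f with hf'def
  have hf'meas : Measurable f' := hfm.stronglyMeasurable_mk.measurable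
  have hff' : f =ᵐ[ν.restrict C] f' := hfm.ae_eq_mk
  set g : X → ℝ≥0∞ := fun x => ENNReal.ofReal (f' x) with hgdef
  have hg : Measurable g := ENNReal.measurable_ofReal.comp hf'meas
  -- the combined a.e. property
  set P : X → Prop := fun x => (x ∈ C → f x = f' x ∧ 0 ≤ f x) ∧ (x ∈ D → f x = 0) with hPdef
  have hP : ∀ᵐ x ∂ν, P x := by
    have h1 : ∀ᵐ x ∂ν, x ∈ C → f x = f' x := (ae_restrict_iff' hC).mp hff'
    have h2' : ∀ᵐ x ∂ν, x ∈ C → 0 ≤ f x := (ae_restrict_iff' hC).mp hf.2.1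
    have h3 : ∀ᵐ x ∂ν, x ∈ D → f x = 0 := (ae_restrict_iff' hD).mp hf.1.2
    filter_upwards [h1, h2', h3] with x hx1 hx2 hx3
    exact ⟨fun h => ⟨hx1 h, hx2 h⟩, hx3⟩
  set N := toMeasurable ν {x | ¬ P x} with hNdef
  have hNmeas : MeasurableSet N := measurableSet_toMeasurable ν _
  have hN0 : ν N = 0 := by
    rw [hNdef, measure_toMeasurable]
    exact ae_iff.mp hP
  have htrans : ∀ᵐ x ∂ν, m x N = 0 := aux_null_transfer hm hrev hNmeas hN0
  -- pointwise key identity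
  have hkey : ∀ᵐ x ∂ν.restrict Ω,
      g x * m x C = 1 + ∫⁻ y in C, g y ∂(m x) ∧ ∫⁻ y in C, g y ∂(m x) ≠ ⊤ := by
    filter_upwards [hf.2.2, ae_restrict_of_ae hP, ae_restrict_of_ae htrans,
      ae_restrict_mem hΩ] with x hx hPx hNx hxΩ
    have hxC : x ∈ C := hΩC hxΩ
    obtain ⟨hfx_eq, hfx_nonneg⟩ := hPx.1 hxC
    have hxint : ∫ y in C, (f y - f x) ∂(m x) = -1 := by linarith [hx]
    have hint : Integrable (fun y => f y - f x) ((m x).restrict C) := by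
      by_contra h
      rw [integral_undef h] at hxint
      norm_num at hxint
    have hintf : Integrable f ((m x).restrict C) := by
      have h := hint.add (integrable_const (f x))
      have he : ((fun y => f y - f x) + fun _ => f x) = f := by funext y; simp
      rwa [he] at h
    have haeP : ∀ᵐ y ∂(m x), P y := by
      rw [ae_iff]
      exact measure_mono_null (subset_toMeasurable ν _) hNx
    have haeC : ∀ᵐ y ∂(m x).restrict C, f y = f' y ∧ 0 ≤ f y := by
      filter_upwards [ae_restrict_of_ae haeP, ae_restrict_mem hC] with y hy hyC
      exact hy.1 hyC
    have h0f : 0 ≤ᵐ[(m x).restrict C] f := haeC.mono fun y hy => hy.2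
    have hofReal : ENNReal.ofReal (∫ y in C, f y ∂(m x)) = ∫⁻ y in C, g y ∂(m x) := by
      rw [ofReal_integral_eq_lintegral_ofReal hintf h0f]
      exact lintegral_congr_ae (haeC.mono fun y hy => by simp only [hgdef]; rw [hy.1])
    have hInonneg : 0 ≤ ∫ y in C, f y ∂(m x) := integral_nonneg_of_ae h0f
    have heq : ∫ y in C, (f y - f x) ∂(m x)
        = (∫ y in C, f y ∂(m x)) - f x * ((m x) C).toReal := by
      rw [integral_sub hintf (integrable_const _), setIntegral_const, smul_eq_mul,
        mul_comm, measureReal_def]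
    have hfeq : f x * ((m x) C).toReal = 1 + ∫ y in C, f y ∂(m x) := by
      rw [heq] at hxint; linarith
    constructor
    · calc g x * m x C = ENNReal.ofReal (f x) * ENNReal.ofReal ((m x C).toReal) := by
            rw [hgdef]; simp only [← hfx_eq, ENNReal.ofReal_toReal (measure_ne_top (m x) C)]
      _ = ENNReal.ofReal (f x * (m x C).toReal) := (ENNReal.ofReal_mul hfx_nonneg).symm
      _ = ENNReal.ofReal (1 + ∫ y in C, f y ∂(m x)) := by rw [hfeq]
      _ = 1 + ∫⁻ y in C, g y ∂(m x) := by
            rw [ENNReal.ofReal_add zero_le_one hInonneg, ENNReal.ofReal_one, hofReal]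
    · rw [← hofReal]; exact ENNReal.ofReal_ne_top
  -- finiteness of ∫⁻ g
  have hgC : ∫⁻ x in C, g x ∂ν ≠ ⊤ := by
    have hcg : ∫⁻ x in C, g x ∂ν = ∫⁻ x in C, ENNReal.ofReal (f x) ∂ν :=
      lintegral_congr_ae (hff'.mono fun x hx => by rw [hgdef]; simp [hx])
    have hle : ∫⁻ x in C, ENNReal.ofReal (f x) ∂ν ≤ ∫⁻ x in C, ‖f x‖₊ ∂ν := by
      apply lintegral_mono
      intro x
      exact Real.ofReal_le_enorm (f x)
    rw [hcg]
    exact ne_top_of_le_ne_top hfi.2.ne hle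
  have hgΩ_le : ∫⁻ x in Ω, g x ∂ν ≤ ∫⁻ x in C, g x ∂ν :=
    lintegral_mono' (Measure.restrict_mono hΩC le_rfl) le_rfl
  have hgΩ : ∫⁻ x in Ω, g x ∂ν ≠ ⊤ := ne_top_of_le_ne_top hgC hgΩ_le
  -- main identity
  have hmain : ν Ω + ∫⁻ y in C, g y * m y Ω ∂ν = ∫⁻ x in Ω, g x * m x C ∂ν := by
    rw [← aux_swap hm hrev hΩ hC hg]
    calc ν Ω + ∫⁻ x in Ω, ∫⁻ y in C, g y ∂(m x) ∂ν
        = ∫⁻ _ in Ω, 1 ∂ν + ∫⁻ x in Ω, ∫⁻ y in C, g y ∂(m x) ∂ν := by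
          rw [setLIntegral_one]
      _ = ∫⁻ x in Ω, (1 + ∫⁻ y in C, g y ∂(m x)) ∂ν := (lintegral_add_left measurable_const _).symm
      _ = ∫⁻ x in Ω, g x * m x C ∂ν :=
          (lintegral_congr_ae (hkey.mono fun x hx => hx.1.symm))
  -- boundary term vanishes
  have hDzero : ∫⁻ y in D, g y * m y Ω ∂ν = 0 := by
    have hz : ∀ᵐ y ∂ν.restrict D, g y * m y Ω = 0 := by
      have hfD : ∀ᵐ y ∂ν.restrict D, f y = 0 := hf.1.2
      have hfD' : ∀ᵐ y ∂ν.restrict D, f y = f' y :=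
        ae_restrict_of_ae_restrict_of_subset hDC hff'
      filter_upwards [hfD, hfD'] with y hy1 hy2
      rw [hgdef]
      simp [← hy2, hy1]
    calc ∫⁻ y in D, g y * m y Ω ∂ν = ∫⁻ _ in D, 0 ∂ν := lintegral_congr_ae hz
      _ = 0 := lintegral_zero
  have hsplitC : ∫⁻ y in C, g y * m y Ω ∂ν = ∫⁻ y in Ω, g y * m y Ω ∂ν := by
    have : C = Ω ∪ D := rfl
    rw [this, lintegral_union hD hdisj, hDzero, add_zero]
  -- upper bound for the RHS
  have hub : ∫⁻ x in Ω, g x * m x C ∂ν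
      ≤ ∫⁻ x in Ω, g x * m x Ω ∂ν + ∫⁻ x in Ω, g x ∂ν := by
    rw [← lintegral_add_left (f := fun x => g x * m x Ω) (hg.mul (hm.2 Ω hΩ))]
    apply lintegral_mono
    intro x
    show g x * m x C ≤ g x * m x Ω + g x
    have hCx : m x C = m x Ω + m x D := by
      have : C = Ω ∪ D := rfl
      rw [this, measure_union hdisj hD]
    rw [hCx, mul_add]
    gcongr
    calc g x * m x D ≤ g x * 1 := by gcongr; exact prob_le_one
      _ = g x := mul_one _
  have hAfin : ∫⁻ x in Ω, g x * m x Ω ∂ν ≠ ⊤ := by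
    refine ne_top_of_le_ne_top hgΩ ?_
    apply lintegral_mono
    intro x
    show g x * m x Ω ≤ g x
    calc g x * m x Ω ≤ g x * 1 := by gcongr; exact prob_le_one
      _ = g x := mul_one _
  -- conclude ν Ω ≤ ∫⁻ g
  have hνle : ν Ω ≤ ∫⁻ x in Ω, g x ∂ν := by
    have h := hmain.le.trans hub
    rw [hsplitC] at h
    rw [add_comm (∫⁻ x in Ω, g x * m x Ω ∂ν)] at h
    exact (ENNReal.add_le_add_iff_right hAfin).mp h
  -- back to real integrals
  have hfΩint : IntegrableOn f Ω ν := IntegrableOn.mono_set hfi hΩC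
  have h0fΩ : 0 ≤ᵐ[ν.restrict Ω] f := ae_restrict_of_ae_restrict_of_subset hΩC hf.2.1
  have hgΩeq : ∫⁻ x in Ω, g x ∂ν = ENNReal.ofReal (∫ x in Ω, f x ∂ν) := by
    have hcg : ∫⁻ x in Ω, g x ∂ν = ∫⁻ x in Ω, ENNReal.ofReal (f x) ∂ν := by
      refine lintegral_congr_ae ?_
      filter_upwards [ae_restrict_of_ae_restrict_of_subset hΩC hff'] with x hx
      rw [hgdef]; simp [hx]
    rw [hcg, ← ofReal_integral_eq_lintegral_ofReal hfΩint h0fΩ]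
  have hfinal : ν Ω ≤ ENNReal.ofReal (∫ x in Ω, f x ∂ν) := by rwa [hgΩeq] at hνle
  have hInn : 0 ≤ ∫ x in Ω, f x ∂ν := integral_nonneg_of_ae h0fΩ
  calc (ν Ω).toReal ≤ (ENNReal.ofReal (∫ x in Ω, f x ∂ν)).toReal :=
        ENNReal.toReal_mono ENNReal.ofReal_ne_top hfinal
    _ = ∫ x in Ω, f x ∂ν := ENNReal.toReal_ofReal hInn
end

section
/- Let [X,B,m,ν] be a reversible random walk space and let Ω ∈ B with Ω and Ω_m m-connected, 0 < ν(Ω) < ν(Ω_m) < ∞, and such that Ω satisfies a 2-Poincaré inequality. Then T_m(Ω) equals the maximum, over all nonzero g ∈ L²(Ω_m,ν) vanishing ν-a.e. on ∂_mΩ, of (∫_Ω g dν)² / ((1/2)∫_{Ω_m×Ω_m}|g(y) − g(x)|² dm_x(y)dν(x)); equivalently (∫_Ω g dν)² ≤ T_m(Ω) · (1/2)∫_{Ω_m×Ω_m}|g(y) − g(x)|² dm_x(y)dν(x) for every such g, with equality when g = f_Ω, the m-stress function of Ω. -/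
open MeasureTheory ENNReal Filter Topology

section TorsionAux

open MeasureTheory

variable {α : Type*} [MeasurableSpace α] {μ : Measure α}

lemma aux_integrable_mul {u v : α → ℝ} (hu : MemLp u 2 μ) (hv : MemLp v 2 μ) :
    Integrable (fun x => u x * v x) μ := by
  refine Integrable.mono' ((hu.integrable_sq.add hv.integrable_sq).div_const 2)
    (hu.1.mul hv.1) (Filter.Eventually.of_forall fun x => ?_)
  simp only [Pi.add_apply]
  rw [Real.norm_eq_abs, abs_mul]
  nlinarith [sq_nonneg (|u x| - |v x|), sq_abs (u x), sq_abs (v x), abs_nonneg (u x),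
    abs_nonneg (v x)]

lemma aux_cauchy_schwarz {u v : α → ℝ} (hu : MemLp u 2 μ) (hv : MemLp v 2 μ) :
    (∫ x, u x * v x ∂μ) ^ 2 ≤ (∫ x, u x ^ 2 ∂μ) * (∫ x, v x ^ 2 ∂μ) := by
  have huv : Integrable (fun x => u x * v x) μ := aux_integrable_mul hu hv
  have hu2 : Integrable (fun x => u x ^ 2) μ := hu.integrable_sq
  have hv2 : Integrable (fun x => v x ^ 2) μ := hv.integrable_sq
  have key : ∀ t : ℝ, 0 ≤ (∫ x, v x ^ 2 ∂μ) * (t * t) + (2 * ∫ x, u x * v x ∂μ) * t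
      + ∫ x, u x ^ 2 ∂μ := by
    intro t
    have h0 : 0 ≤ ∫ x, (u x + t * v x) ^ 2 ∂μ := integral_nonneg fun x => sq_nonneg _
    have h1 : ∀ x, (u x + t * v x) ^ 2
        = t * t * v x ^ 2 + (2 * t * (u x * v x) + u x ^ 2) := fun x => by ring
    have e1 : ∫ x, (t * t * v x ^ 2 + (2 * t * (u x * v x) + u x ^ 2)) ∂μ
        = ∫ x, t * t * v x ^ 2 ∂μ + ∫ x, (2 * t * (u x * v x) + u x ^ 2) ∂μ :=
      integral_add (hv2.const_mul _) ((huv.const_mul _).add hu2)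
    have e2 : ∫ x, (2 * t * (u x * v x) + u x ^ 2) ∂μ
        = ∫ x, 2 * t * (u x * v x) ∂μ + ∫ x, u x ^ 2 ∂μ := integral_add (huv.const_mul _) hu2
    have e3 : ∫ x, t * t * v x ^ 2 ∂μ = t * t * ∫ x, v x ^ 2 ∂μ := integral_const_mul _ _
    have e4 : ∫ x, 2 * t * (u x * v x) ∂μ = 2 * t * ∫ x, u x * v x ∂μ := integral_const_mul _ _
    rw [integral_congr_ae (Filter.Eventually.of_forall h1), e1, e2, e3, e4] at h0
    nlinarith [h0]
  have hd := discrim_le_zero key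
  rw [discrim] at hd
  nlinarith [hd]

end TorsionAux

section TorsionAux2

open MeasureTheory ProbabilityTheory

variable {X : Type*} [MeasurableSpace X]

/-- The kernel `x ↦ (m x).restrict C`. -/
noncomputable def auxKer (m : X → Measure X) (C : Set X)
    (hm : ∀ A : Set X, MeasurableSet A → Measurable fun x => m x A) (hC : MeasurableSet C) :
    Kernel X X where
  toFun x := (m x).restrict C
  measurable' := Measure.measurable_of_measurable_coe _ fun A hA => by
    simp_rw [Measure.restrict_apply hA]
    exact hm (A ∩ C) (hA.inter hC)

@[simp] lemma auxKer_apply (m : X → Measure X) (C : Set X)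
    (hm : ∀ A : Set X, MeasurableSet A → Measurable fun x => m x A) (hC : MeasurableSet C)
    (x : X) : auxKer m C hm hC x = (m x).restrict C := rfl

end TorsionAux2

open ProbabilityTheory RandomWalkSpace

/-- variational characterization of the `m`-torsional rigidity:
`(∫_Ω g dν)² ≤ T_m(Ω) · (1/2)∫∫|∇g|²` for every `g ∈ L²_0(Ω_m,ν)`, with equality at the
`m`-stress function `f_Ω`. -/
theorem torsion_variational {X : Type*} [MeasurableSpace X]
    (m : X → Measure X) (ν : Measure X) [SigmaFinite ν]
    (hm : RandomWalkSpace.IsRandomWalk m) (hrev : RandomWalkSpace.Reversible m ν)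
    (Ω : Set X) (hΩ : MeasurableSet Ω)
    (hconn : RandomWalkSpace.mConnected m ν Ω)
    (hconnm : RandomWalkSpace.mConnected m ν (RandomWalkSpace.mClosure m Ω))
    (h0 : 0 < ν Ω) (h1 : ν Ω < ν (RandomWalkSpace.mClosure m Ω))
    (h2 : ν (RandomWalkSpace.mClosure m Ω) < ⊤)
    (hpoinc : RandomWalkSpace.PoincareInequality m ν Ω 2)
    (f : X → ℝ) (hf : RandomWalkSpace.IsStressFunction m ν Ω f) :
    (∀ g : X → ℝ, RandomWalkSpace.InLp0 m ν Ω 2 g →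
      ENNReal.ofReal ((∫ x in Ω, g x ∂ν) ^ 2) ≤
        ENNReal.ofReal (∫ x in Ω, f x ∂ν) * (RandomWalkSpace.energy m ν Ω 2 g / 2)) ∧
    ENNReal.ofReal ((∫ x in Ω, f x ∂ν) ^ 2) =
      ENNReal.ofReal (∫ x in Ω, f x ∂ν) * (RandomWalkSpace.energy m ν Ω 2 f / 2) := by
    classical
  obtain ⟨hprob, hmA⟩ := hm
  obtain ⟨⟨hfmem2, hfbd⟩, hfpos, hfstress⟩ := hf
  simp only [ENNReal.ofReal_ofNat] at hfmem2
  -- basic measurability facts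
  have hbd_meas : MeasurableSet (mBoundary m Ω) := by
    have h1 : Measurable fun x => m x Ω := hmA Ω hΩ
    have h2' : mBoundary m Ω = Ωᶜ ∩ (fun x => m x Ω) ⁻¹' Set.Ioi 0 := by
      ext x
      simp only [mBoundary, Set.mem_setOf_eq, Set.mem_inter_iff, Set.mem_compl_iff,
        Set.mem_preimage, Set.mem_Ioi]
    rw [h2']
    exact hΩ.compl.inter (h1 measurableSet_Ioi)
  have hCmeas : MeasurableSet (mClosure m Ω) := hΩ.union hbd_meas
  have hΩsubC : Ω ⊆ mClosure m Ω := Set.subset_union_left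
  have hbdsubC : mBoundary m Ω ⊆ mClosure m Ω := Set.subset_union_right
  have hdisj : Disjoint Ω (mBoundary m Ω) := Set.disjoint_left.mpr fun x hx hx' => hx'.1 hx
  -- the kernel and the symmetric measure on the product
  set C : Set X := mClosure m Ω with hCdef
  set κ : Kernel X X := auxKer m C hmA hCmeas with hκdef
  have hκapp : ∀ x, κ x = (m x).restrict C := fun x => rfl
  haveI : IsFiniteKernel κ := ⟨⟨1, ENNReal.one_lt_top, fun x => by
    rw [hκapp, Measure.restrict_apply_univ]
    haveI := hprob x
    exact prob_le_one⟩⟩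
  set νC : Measure X := ν.restrict C with hνCdef
  haveI : IsFiniteMeasure νC := ⟨by rw [hνCdef, Measure.restrict_apply_univ]; exact h2⟩
  set π : Measure (X × X) := νC.compProd κ with hπdef
  have hπ_prod : ∀ s t : Set X, MeasurableSet s → MeasurableSet t →
      π (s ×ˢ t) = ∫⁻ x in s ∩ C, m x (t ∩ C) ∂ν := by
    intro s t hs ht
    rw [hπdef, Measure.compProd_apply_prod hs ht]
    have h1 : ∀ x, κ x t = m x (t ∩ C) := fun x => by
      rw [hκapp, Measure.restrict_apply ht]
    simp_rw [h1]
    rw [hνCdef, Measure.restrict_restrict hs]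
  -- symmetry of π
  have hπswap : π.map Prod.swap = π := by
    refine ext_of_generate_finite _ generateFrom_prod.symm
      isPiSystem_prod ?_ ?_
    · rintro _ ⟨s, hs, t, ht, rfl⟩
      simp only [Set.mem_setOf_eq] at hs ht
      rw [Measure.map_apply measurable_swap (hs.prod ht), Set.preimage_swap_prod,
        hπ_prod t s ht hs, hπ_prod s t hs ht]
      exact hrev (t ∩ C) (s ∩ C) (ht.inter hCmeas) (hs.inter hCmeas)
    · rw [Measure.map_apply measurable_swap MeasurableSet.univ, Set.preimage_univ]
  -- null-set transfer along the two projections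
  have hπ_fst_null : ∀ {N : Set X}, MeasurableSet N → νC N = 0 → π (Prod.fst ⁻¹' N) = 0 := by
    intro N hN hN0
    have hset : (Prod.fst ⁻¹' N : Set (X × X)) = N ×ˢ Set.univ := by ext p; simp
    rw [hset, hπ_prod N Set.univ hN MeasurableSet.univ]
    have hle : ∫⁻ x in N ∩ C, m x (Set.univ ∩ C) ∂ν ≤ ∫⁻ x in N ∩ C, 1 ∂ν := by
      refine lintegral_mono fun x => ?_
      haveI := hprob x
      exact prob_le_one
    rw [setLIntegral_one] at hle
    have hN0' : ν (N ∩ C) = 0 := by rwa [hνCdef, Measure.restrict_apply hN] at hN0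
    exact le_antisymm (hle.trans hN0'.le) zero_le
  have hπ_snd_null : ∀ {N : Set X}, MeasurableSet N → νC N = 0 → π (Prod.snd ⁻¹' N) = 0 := by
    intro N hN hN0
    calc π (Prod.snd ⁻¹' N) = (π.map Prod.swap) (Prod.snd ⁻¹' N) := by rw [hπswap]
      _ = π (Prod.swap ⁻¹' (Prod.snd ⁻¹' N)) :=
          Measure.map_apply measurable_swap (measurable_snd hN)
      _ = π (Prod.fst ⁻¹' N) := rfl
      _ = 0 := hπ_fst_null hN hN0
  have hae_fst : ∀ {u v : X → ℝ}, u =ᵐ[νC] v →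
      (fun p : X × X => u p.1) =ᵐ[π] fun p => v p.1 := by
    intro u v huv
    obtain ⟨N, hsub, hNmeas, hN0⟩ := exists_measurable_superset_of_null (ae_iff.mp huv)
    refine ae_iff.mpr (measure_mono_null ?_ (hπ_fst_null hNmeas hN0))
    exact fun p hp => hsub hp
  have hκ_null : ∀ {N : Set X}, MeasurableSet N → νC N = 0 → ∀ᵐ x ∂νC, κ x N = 0 := by
    intro N hN hN0
    have h1 : ∫⁻ x, κ x N ∂νC = π (Prod.snd ⁻¹' N) := by
      have hset : (Prod.snd ⁻¹' N : Set (X × X)) = Set.univ ×ˢ N := by ext p; simp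
      rw [hset, hπdef, Measure.compProd_apply_prod MeasurableSet.univ hN, Measure.restrict_univ]
    exact (lintegral_eq_zero_iff (κ.measurable_coe hN)).mp (h1.trans (hπ_snd_null hN hN0))
  -- L² membership transfer to π
  have hfst_le : π.fst ≤ νC := by
    refine Measure.le_iff.mpr fun s hs => ?_
    rw [Measure.fst_apply hs]
    have hset : (Prod.fst ⁻¹' s : Set (X × X)) = s ×ˢ Set.univ := by ext p; simp
    rw [hset, hπ_prod s Set.univ hs MeasurableSet.univ]
    calc ∫⁻ x in s ∩ C, m x (Set.univ ∩ C) ∂ν ≤ ∫⁻ x in s ∩ C, 1 ∂ν :=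
          lintegral_mono fun x => by haveI := hprob x; exact prob_le_one
      _ = ν (s ∩ C) := setLIntegral_one _
      _ = νC s := (Measure.restrict_apply hs).symm
  have hsnd_le : π.snd ≤ νC := by
    refine Measure.le_iff.mpr fun s hs => ?_
    rw [Measure.snd_apply hs]
    calc π (Prod.snd ⁻¹' s) = (π.map Prod.swap) (Prod.snd ⁻¹' s) := by rw [hπswap]
      _ = π (Prod.swap ⁻¹' (Prod.snd ⁻¹' s)) :=
          Measure.map_apply measurable_swap (measurable_snd hs)
      _ = π (Prod.fst ⁻¹' s) := rfl
      _ = π.fst s := (Measure.fst_apply hs).symm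
      _ ≤ νC s := Measure.le_iff'.mp hfst_le s
  have hmem_fst : ∀ {u : X → ℝ}, MemLp u 2 νC → MemLp (fun p : X × X => u p.1) 2 π := by
    intro u hu
    have h1 : MemLp u 2 π.fst := hu.mono_measure hfst_le
    have hfst_eq : π.fst = π.map Prod.fst := rfl
    rw [hfst_eq] at h1
    exact (memLp_map_measure_iff h1.aestronglyMeasurable measurable_fst.aemeasurable).mp h1
  have hmem_snd : ∀ {u : X → ℝ}, MemLp u 2 νC → MemLp (fun p : X × X => u p.2) 2 π := by
    intro u hu
    have h1 : MemLp u 2 π.snd := hu.mono_measure hsnd_le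
    have hsnd_eq : π.snd = π.map Prod.snd := rfl
    rw [hsnd_eq] at h1
    exact (memLp_map_measure_iff h1.aestronglyMeasurable measurable_snd.aemeasurable).mp h1
  -- measurable representative of f
  have hfmem : MemLp f 2 νC := hfmem2
  set F : X → ℝ := hfmem.aestronglyMeasurable.mk f with hFdef
  have hFsm : StronglyMeasurable F := hfmem.aestronglyMeasurable.stronglyMeasurable_mk
  have hfF : f =ᵐ[νC] F := hfmem.aestronglyMeasurable.ae_eq_mk
  have hFmem : MemLp F 2 νC := hfmem.ae_eq hfF
  -- the stress equation, in terms of the kernel κ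
  have hstressκ : ∀ᵐ x ∂ν.restrict Ω, -∫ y, (f y - f x) ∂(κ x) = 1 := hfstress
  obtain ⟨Nf, hNfsub, hNfmeas, hNf0⟩ := exists_measurable_superset_of_null (ae_iff.mp hfF)
  have hφae : ∀ᵐ x ∂νC, ∫ y, (F x - F y) ∂(κ x) = -∫ y, (f y - f x) ∂(κ x) := by
    filter_upwards [hκ_null hNfmeas hNf0, hfF] with x hxN hxf
    have hae' : ∀ᵐ y ∂(κ x), f y = F y := by
      filter_upwards [measure_eq_zero_iff_ae_notMem.mp hxN] with y hy
      by_contra hne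
      exact hy (hNfsub hne)
    have h1 : ∫ y, (F y - F x) ∂(κ x) = ∫ y, (f y - f x) ∂(κ x) := by
      refine integral_congr_ae ?_
      filter_upwards [hae'] with y hy
      rw [hy, hxf]
    calc ∫ y, (F x - F y) ∂(κ x) = ∫ y, -(F y - F x) ∂(κ x) := by
          refine integral_congr_ae (Filter.Eventually.of_forall fun y => ?_); ring
      _ = -∫ y, (F y - F x) ∂(κ x) := integral_neg _
      _ = -∫ y, (f y - f x) ∂(κ x) := by rw [h1]
  -- restriction helper
  have hres : ∀ s : Set X, MeasurableSet s → s ⊆ C → νC.restrict s = ν.restrict s := by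
    intro s hs hsC
    rw [hνCdef, Measure.restrict_restrict hs, Set.inter_eq_self_of_subset_left hsC]
  -- the key bilinear identity
  have hkey : ∀ g' : X → ℝ, MemLp g' 2 νC →
      (∀ᵐ x ∂ν.restrict (mBoundary m Ω), g' x = 0) →
      ∀ G' : X → ℝ, StronglyMeasurable G' → g' =ᵐ[νC] G' →
      2 * ∫ x in Ω, g' x ∂ν = ∫ p : X × X, (F p.2 - F p.1) * (G' p.2 - G' p.1) ∂π := by
    intro g' hg'mem hg'bd G' hG'sm hg'G'
    have hG'mem : MemLp G' 2 νC := hg'mem.ae_eq hg'G'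
    have hF1 : MemLp (fun p : X × X => F p.1) 2 π := hmem_fst hFmem
    have hF2 : MemLp (fun p : X × X => F p.2) 2 π := hmem_snd hFmem
    have hG1 : MemLp (fun p : X × X => G' p.1) 2 π := hmem_fst hG'mem
    have hG2 : MemLp (fun p : X × X => G' p.2) 2 π := hmem_snd hG'mem
    set w : X × X → ℝ := fun p => G' p.1 * (F p.1 - F p.2) with hwdef
    have hwint : Integrable w π := aux_integrable_mul hG1 (hF1.sub hF2)
    have hwsm : StronglyMeasurable w :=
      (hG'sm.comp_measurable measurable_fst).mul
        ((hFsm.comp_measurable measurable_fst).sub (hFsm.comp_measurable measurable_snd))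
    have hw1 : ∫ p, w p ∂π = ∫ x, G' x * ∫ y, (F x - F y) ∂(κ x) ∂νC := by
      rw [hπdef, Measure.integral_compProd hwint]
      refine integral_congr_ae (Filter.Eventually.of_forall fun x => ?_)
      simp only [hwdef]
      exact integral_const_mul _ _
    have hwint2 : Integrable (fun x => G' x * ∫ y, (F x - F y) ∂(κ x)) νC := by
      obtain ⟨hae, hnorm⟩ := (Measure.integrable_compProd_iff hwint.1).mp (hπdef ▸ hwint)
      have h3 : Integrable (fun x => ∫ y, w (x, y) ∂(κ x)) νC := by
        refine hnorm.mono' hwsm.integral_kernel_prod_right'.aestronglyMeasurable ?_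
        filter_upwards with x
        exact norm_integral_le_integral_norm _
      refine h3.congr (Filter.Eventually.of_forall fun x => ?_)
      simp only [hwdef]
      exact integral_const_mul _ _
    have hintΩ : IntegrableOn (fun x => G' x * ∫ y, (F x - F y) ∂(κ x)) Ω ν := by
      have h4 := hwint2.restrict (s := Ω)
      rwa [hres Ω hΩ hΩsubC] at h4
    have hintB : IntegrableOn (fun x => G' x * ∫ y, (F x - F y) ∂(κ x)) (mBoundary m Ω) ν := by
      have h4 := hwint2.restrict (s := mBoundary m Ω)
      rwa [hres _ hbd_meas hbdsubC] at h4
    have hsplit : ∫ x, G' x * ∫ y, (F x - F y) ∂(κ x) ∂νC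
        = (∫ x in Ω, G' x * ∫ y, (F x - F y) ∂(κ x) ∂ν)
          + ∫ x in mBoundary m Ω, G' x * ∫ y, (F x - F y) ∂(κ x) ∂ν := by
      rw [hνCdef]
      exact setIntegral_union hdisj hbd_meas hintΩ hintB
    have hΩae : ∀ᵐ x ∂ν.restrict Ω, G' x * ∫ y, (F x - F y) ∂(κ x) = g' x := by
      filter_upwards [ae_restrict_of_ae_restrict_of_subset hΩsubC (hνCdef ▸ hφae),
        ae_restrict_of_ae_restrict_of_subset hΩsubC (hνCdef ▸ hg'G'), hstressκ] with x hx1 hx2 hx3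
      rw [hx1, hx3, mul_one, ← hx2]
    have hBae : ∀ᵐ x ∂ν.restrict (mBoundary m Ω),
        G' x * ∫ y, (F x - F y) ∂(κ x) = 0 := by
      filter_upwards [hg'bd,
        ae_restrict_of_ae_restrict_of_subset hbdsubC (hνCdef ▸ hg'G')] with x hx1 hx2
      rw [← hx2, hx1, zero_mul]
    have hwΩ : ∫ p, w p ∂π = ∫ x in Ω, g' x ∂ν := by
      rw [hw1, hsplit, integral_congr_ae hΩae, integral_congr_ae hBae, integral_zero, add_zero]
    -- symmetrize
    have hswapemb : MeasurableEmbedding (Prod.swap : X × X → X × X) :=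
      (MeasurableEquiv.prodComm : (X × X) ≃ᵐ (X × X)).measurableEmbedding
    have hmp : MeasurePreserving (Prod.swap : X × X → X × X) π π := ⟨measurable_swap, hπswap⟩
    have hswapint : ∫ p, w p ∂π = ∫ p : X × X, G' p.2 * (F p.2 - F p.1) ∂π := by
      have := hmp.integral_comp hswapemb w
      rw [← this]
      refine integral_congr_ae (Filter.Eventually.of_forall fun p => ?_)
      rfl
    have hw'int : Integrable (fun p : X × X => G' p.2 * (F p.2 - F p.1)) π :=
      aux_integrable_mul hG2 (hF2.sub hF1)
    have hsum : ∫ p, w p ∂π + ∫ p : X × X, G' p.2 * (F p.2 - F p.1) ∂π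
        = ∫ p : X × X, (F p.2 - F p.1) * (G' p.2 - G' p.1) ∂π := by
      rw [← integral_add hwint hw'int]
      refine integral_congr_ae (Filter.Eventually.of_forall fun p => ?_)
      simp only [hwdef]
      ring
    calc 2 * ∫ x in Ω, g' x ∂ν = (∫ x in Ω, g' x ∂ν) + ∫ x in Ω, g' x ∂ν := by ring
      _ = ∫ p, w p ∂π + ∫ p : X × X, G' p.2 * (F p.2 - F p.1) ∂π := by
          rw [hwΩ, ← hswapint, hwΩ]
      _ = ∫ p : X × X, (F p.2 - F p.1) * (G' p.2 - G' p.1) ∂π := hsum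
  -- main quantities
  have hEFint : Integrable (fun p : X × X => (F p.2 - F p.1) ^ 2) π :=
    ((hmem_snd hFmem).sub (hmem_fst hFmem)).integrable_sq
  have hTEF : 2 * ∫ x in Ω, f x ∂ν = ∫ p : X × X, (F p.2 - F p.1) ^ 2 ∂π := by
    rw [hkey f hfmem hfbd F hFsm hfF]
    refine integral_congr_ae (Filter.Eventually.of_forall fun p => ?_)
    ring
  have hEFnn : 0 ≤ ∫ p : X × X, (F p.2 - F p.1) ^ 2 ∂π := integral_nonneg fun p => sq_nonneg _
  have hT0 : 0 ≤ ∫ x in Ω, f x ∂ν := by nlinarith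
  -- the energy in terms of π
  have henergy : ∀ u U : X → ℝ, u =ᵐ[νC] U → StronglyMeasurable U →
      energy m ν Ω 2 u = ∫⁻ p : X × X, ENNReal.ofReal ((U p.2 - U p.1) ^ 2) ∂π := by
    intro u U huU hUsm
    obtain ⟨N, hsub, hNmeas, hN0⟩ := exists_measurable_superset_of_null (ae_iff.mp huU)
    have hmeas2 : Measurable fun p : X × X => ENNReal.ofReal ((U p.2 - U p.1) ^ 2) :=
      (((hUsm.measurable.comp measurable_snd).sub
        (hUsm.measurable.comp measurable_fst)).pow_const 2).ennreal_ofReal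
    have hrpow : ∀ a : ℝ, |a| ^ (2 : ℝ) = a ^ 2 := fun a => by
      rw [show ((2 : ℝ)) = ((2 : ℕ) : ℝ) by norm_num, Real.rpow_natCast, sq_abs]
    show (∫⁻ x in C, ∫⁻ y in C, ENNReal.ofReal (|u y - u x| ^ (2 : ℝ)) ∂(m x) ∂ν)
      = ∫⁻ p : X × X, ENNReal.ofReal ((U p.2 - U p.1) ^ 2) ∂π
    rw [hπdef, Measure.lintegral_compProd hmeas2]
    refine lintegral_congr_ae ?_
    filter_upwards [hκ_null hNmeas hN0, huU] with x hxN hxu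
    refine lintegral_congr_ae ?_
    filter_upwards [measure_eq_zero_iff_ae_notMem.mp hxN] with y hy
    have huy : u y = U y := by by_contra hne; exact hy (hsub hne)
    rw [huy, hxu, hrpow]
  have henergy_f : energy m ν Ω 2 f
      = ENNReal.ofReal (∫ p : X × X, (F p.2 - F p.1) ^ 2 ∂π) := by
    rw [henergy f F hfF hFsm,
      ← ofReal_integral_eq_lintegral_ofReal hEFint (Filter.Eventually.of_forall fun p => sq_nonneg _)]
  constructor
  · -- the inequality
    intro g hg
    obtain ⟨hgmem2, hgbd⟩ := hg
    simp only [ENNReal.ofReal_ofNat] at hgmem2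
    have hgmem : MemLp g 2 νC := hgmem2
    set G : X → ℝ := hgmem.aestronglyMeasurable.mk g with hGdef
    have hGsm : StronglyMeasurable G := hgmem.aestronglyMeasurable.stronglyMeasurable_mk
    have hgG : g =ᵐ[νC] G := hgmem.aestronglyMeasurable.ae_eq_mk
    have hGmem : MemLp G 2 νC := hgmem.ae_eq hgG
    have hEGint : Integrable (fun p : X × X => (G p.2 - G p.1) ^ 2) π :=
      ((hmem_snd hGmem).sub (hmem_fst hGmem)).integrable_sq
    have hEGnn : 0 ≤ ∫ p : X × X, (G p.2 - G p.1) ^ 2 ∂π := integral_nonneg fun p => sq_nonneg _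
    have hIg : 2 * ∫ x in Ω, g x ∂ν
        = ∫ p : X × X, (F p.2 - F p.1) * (G p.2 - G p.1) ∂π := hkey g hgmem hgbd G hGsm hgG
    have hcs : (∫ p : X × X, (F p.2 - F p.1) * (G p.2 - G p.1) ∂π) ^ 2
        ≤ (∫ p : X × X, (F p.2 - F p.1) ^ 2 ∂π) * ∫ p : X × X, (G p.2 - G p.1) ^ 2 ∂π :=
      aux_cauchy_schwarz ((hmem_snd hFmem).sub (hmem_fst hFmem))
        ((hmem_snd hGmem).sub (hmem_fst hGmem))
    have henergy_g : energy m ν Ω 2 g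
        = ENNReal.ofReal (∫ p : X × X, (G p.2 - G p.1) ^ 2 ∂π) := by
      rw [henergy g G hgG hGsm, ← ofReal_integral_eq_lintegral_ofReal hEGint
        (Filter.Eventually.of_forall fun p => sq_nonneg _)]
    rw [henergy_g]
    have hdiv : ENNReal.ofReal (∫ p : X × X, (G p.2 - G p.1) ^ 2 ∂π) / 2
        = ENNReal.ofReal ((∫ p : X × X, (G p.2 - G p.1) ^ 2 ∂π) / 2) := by
      rw [ENNReal.ofReal_div_of_pos (by norm_num : (0:ℝ) < 2), ENNReal.ofReal_ofNat]
    rw [hdiv, ← ENNReal.ofReal_mul hT0]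
    refine ENNReal.ofReal_le_ofReal ?_
    have hS : (2 * ∫ x in Ω, g x ∂ν) ^ 2
        ≤ (2 * ∫ x in Ω, f x ∂ν) * ∫ p : X × X, (G p.2 - G p.1) ^ 2 ∂π := by
      rw [hIg, hTEF]
      exact hcs
    nlinarith [hS, hEGnn, hT0]
  · -- the equality
    rw [henergy_f, ← hTEF]
    have h2T : ENNReal.ofReal (2 * ∫ x in Ω, f x ∂ν)
        = 2 * ENNReal.ofReal (∫ x in Ω, f x ∂ν) := by
      rw [ENNReal.ofReal_mul (by norm_num : (0:ℝ) ≤ 2), ENNReal.ofReal_ofNat]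
    rw [h2T, mul_comm (2 : ℝ≥0∞), mul_div_assoc,
      ENNReal.div_self (by norm_num) (by norm_num), mul_one, ← ENNReal.ofReal_mul hT0, sq]
end

section
/- Let [X,B,m,ν] be a reversible random walk space and let Ω ∈ B be m-connected with Ω_m also m-connected and 0 < ν(Ω) < ν(Ω_m) < ∞. Then g_{m,Ω}(1) < g_{m,Ω}(0) and g_{m,Ω}(2) < g_{m,Ω}(1). -/
open MeasureTheory ENNReal Filter Topology

/-- under the standing assumptions, `g_{m,Ω}(1) < g_{m,Ω}(0)` and
`g_{m,Ω}(2) < g_{m,Ω}(1)`. -/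
theorem gseq_strict {X : Type*} [MeasurableSpace X]
    (m : X → Measure X) (ν : Measure X) [SigmaFinite ν]
    (hm : RandomWalkSpace.IsRandomWalk m) (hrev : RandomWalkSpace.Reversible m ν)
    (Ω : Set X) (hΩ : MeasurableSet Ω)
    (hconn : RandomWalkSpace.mConnected m ν Ω)
    (hconnm : RandomWalkSpace.mConnected m ν (RandomWalkSpace.mClosure m Ω))
    (h0 : 0 < ν Ω) (h1 : ν Ω < ν (RandomWalkSpace.mClosure m Ω))
    (h2 : ν (RandomWalkSpace.mClosure m Ω) < ⊤) :
    RandomWalkSpace.gseq m ν Ω 1 < RandomWalkSpace.gseq m ν Ω 0 ∧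
      RandomWalkSpace.gseq m ν Ω 2 < RandomWalkSpace.gseq m ν Ω 1 := by
  classical
  obtain ⟨hprob, hmeas⟩ := hm
  set f : X → ℝ≥0∞ := fun x => m x Ω with hf
  set g : X → ℝ≥0∞ := fun x => m x Ωᶜ with hg
  have hfm : Measurable f := hmeas Ω hΩ
  have hgm : Measurable g := hmeas Ωᶜ hΩ.compl
  have hsum1 : ∀ x, f x + g x = 1 := fun x => by
    haveI := hprob x
    simpa [hf, hg] using measure_add_measure_compl (μ := m x) hΩ
  -- the boundary
  have hbd : RandomWalkSpace.mBoundary m Ω = Ωᶜ ∩ {x | 0 < f x} := by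
    ext x; simp [RandomWalkSpace.mBoundary, hf, Set.mem_compl_iff]
  have hbdmeas : MeasurableSet (RandomWalkSpace.mBoundary m Ω) := by
    rw [hbd]
    exact hΩ.compl.inter (measurableSet_lt measurable_const hfm)
  have hdisj : Disjoint Ω (RandomWalkSpace.mBoundary m Ω) :=
    Set.disjoint_left.2 fun x hx hx' => hx'.1 hx
  have hclm : ν (RandomWalkSpace.mClosure m Ω) = ν Ω + ν (RandomWalkSpace.mBoundary m Ω) :=
    measure_union hdisj hbdmeas
  have hνΩtop : ν Ω < ⊤ :=
    lt_of_le_of_lt (measure_mono Set.subset_union_left) h2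
  have hbdpos : 0 < ν (RandomWalkSpace.mBoundary m Ω) := by
    rcases eq_zero_or_pos (ν (RandomWalkSpace.mBoundary m Ω)) with h | h
    · rw [hclm, h, add_zero] at h1; exact absurd h1 (lt_irrefl _)
    · exact h
  -- ∫_Ω m x Ωᶜ > 0
  have key1 : 0 < ∫⁻ x in Ω, m x (RandomWalkSpace.mBoundary m Ω) ∂ν :=
    hconnm Ω (RandomWalkSpace.mBoundary m Ω) hΩ hbdmeas Set.subset_union_left
      Set.subset_union_right rfl h0 hbdpos
  have hΩc_pos : 0 < ∫⁻ x in Ω, g x ∂ν := by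
    refine lt_of_lt_of_le key1 (lintegral_mono fun x => measure_mono ?_)
    exact fun y hy => hy.1
  -- values of gseq
  have hs1 : ∀ x, RandomWalkSpace.survival m Ω 1 x = f x := fun x => by
    simp [RandomWalkSpace.survival, hf]
  have hg0 : RandomWalkSpace.gseq m ν Ω 0 = ν Ω := by
    simp [RandomWalkSpace.gseq, RandomWalkSpace.survival]
  have hg1 : RandomWalkSpace.gseq m ν Ω 1 = ∫⁻ x in Ω, f x ∂ν :=
    lintegral_congr fun x => hs1 x
  have hadd : (∫⁻ x in Ω, f x ∂ν) + (∫⁻ x in Ω, g x ∂ν) = ν Ω := by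
    rw [← lintegral_add_left hfm]
    calc ∫⁻ x in Ω, (f x + g x) ∂ν = ∫⁻ _ in Ω, 1 ∂ν := lintegral_congr fun x => hsum1 x
      _ = ν Ω := setLIntegral_one Ω
  have hfle : (∫⁻ x in Ω, f x ∂ν) ≤ ν Ω := hadd ▸ le_self_add
  have hfne : (∫⁻ x in Ω, f x ∂ν) ≠ ⊤ := (lt_of_le_of_lt hfle hνΩtop).ne
  have first : RandomWalkSpace.gseq m ν Ω 1 < RandomWalkSpace.gseq m ν Ω 0 := by
    rw [hg0, hg1, ← hadd]
    exact ENNReal.lt_add_right hfne hΩc_pos.ne'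
  -- second part
  have hmker : Measurable m := Measure.measurable_of_measurable_coe m hmeas
  let κ : ProbabilityTheory.Kernel X X := ⟨m, hmker⟩
  have hkint : ∀ F : X → ℝ≥0∞, Measurable F →
      Measurable fun x => ∫⁻ y in Ω, F y ∂(m x) := by
    intro F hF
    have h1' : ∀ x, ∫⁻ y in Ω, F y ∂(m x) = ∫⁻ y, Ω.indicator F y ∂(κ x) := fun x =>
      (lintegral_indicator hΩ F).symm
    simp_rw [h1']
    haveI : ProbabilityTheory.IsMarkovKernel κ := ⟨fun x => hprob x⟩
    exact Measurable.lintegral_kernel_prod_right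
      (f := fun (_ : X) y => Ω.indicator F y) ((hF.indicator hΩ).comp measurable_snd)
  set inn : X → ℝ≥0∞ := fun x => ∫⁻ y in Ω, g y ∂(m x) with hinn
  have hinnm : Measurable inn := hkint g hgm
  have hs2m : Measurable fun x => ∫⁻ y in Ω, f y ∂(m x) := hkint f hfm
  have hs2 : ∀ x, RandomWalkSpace.survival m Ω 2 x = ∫⁻ y in Ω, f y ∂(m x) := fun x => by
    show (∫⁻ y in Ω, RandomWalkSpace.survival m Ω 1 y ∂(m x)) = _
    exact lintegral_congr fun y => hs1 y
  have hptsum : ∀ x, RandomWalkSpace.survival m Ω 2 x + inn x = f x := fun x => by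
    rw [hs2, hinn, ← lintegral_add_left hfm]
    calc ∫⁻ y in Ω, (f y + g y) ∂(m x) = ∫⁻ _ in Ω, 1 ∂(m x) :=
          lintegral_congr fun y => hsum1 y
      _ = m x Ω := setLIntegral_one Ω
  have hadd2 : RandomWalkSpace.gseq m ν Ω 2 + (∫⁻ x in Ω, inn x ∂ν)
      = RandomWalkSpace.gseq m ν Ω 1 := by
    have e1 : RandomWalkSpace.gseq m ν Ω 2 = ∫⁻ x in Ω, (∫⁻ y in Ω, f y ∂(m x)) ∂ν :=
      lintegral_congr fun x => hs2 x
    rw [e1, hg1, ← lintegral_add_left hs2m]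
    refine lintegral_congr fun x => ?_
    have h' := hptsum x
    rw [hs2 x] at h'
    exact h'
  -- the set S
  set T : Set X := Function.support g with hT
  have hTmeas : MeasurableSet T := measurableSet_support hgm
  have hνS : 0 < ν (T ∩ Ω) := by
    rw [← Measure.restrict_apply hTmeas]
    exact (lintegral_pos_iff_support hgm).1 hΩc_pos
  have key2 : 0 < ∫⁻ x in Ω, m x (T ∩ Ω) ∂ν :=
    hconn Ω (T ∩ Ω) hΩ (hTmeas.inter hΩ) Set.Subset.rfl Set.inter_subset_right
      (Set.union_eq_self_of_subset_right Set.inter_subset_right) h0 hνS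
  have hiff : ∀ x, 0 < inn x ↔ 0 < m x (T ∩ Ω) := fun x => by
    rw [hinn]
    rw [lintegral_pos_iff_support hgm, Measure.restrict_apply hTmeas]
  have hsupp : Function.support inn = Function.support fun x => m x (T ∩ Ω) := by
    ext x
    simp only [Function.mem_support, ← pos_iff_ne_zero]
    exact hiff x
  have hIpos : 0 < ∫⁻ x in Ω, inn x ∂ν := by
    rw [lintegral_pos_iff_support hinnm, hsupp,
      ← lintegral_pos_iff_support (hmeas _ (hTmeas.inter hΩ))]
    exact key2
  have hg2le : RandomWalkSpace.gseq m ν Ω 2 ≤ RandomWalkSpace.gseq m ν Ω 1 :=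
    hadd2 ▸ le_self_add
  have hg2ne : RandomWalkSpace.gseq m ν Ω 2 ≠ ⊤ := by
    refine (lt_of_le_of_lt (hg2le.trans ?_) hνΩtop).ne
    rw [hg1]; exact hfle
  refine ⟨first, ?_⟩
  calc RandomWalkSpace.gseq m ν Ω 2
      < RandomWalkSpace.gseq m ν Ω 2 + ∫⁻ x in Ω, inn x ∂ν :=
        ENNReal.lt_add_right hg2ne hIpos.ne'
    _ = RandomWalkSpace.gseq m ν Ω 1 := hadd2
end

section
/- Let [X,B,m,ν] be a reversible random walk space and let Ω ∈ B with Ω and Ω_m m-connected, 0 < ν(Ω) < ν(Ω_m) < ∞, and such that Ω satisfies a 2-Poincaré inequality. Let Q_Ω^m(t) = Σ_{k=0}^∞ g_{m,Ω}(k) e^{−t} t^k / k! for t ≥ 0 (the spectral m-heat content of Ω). Then T_m(Ω) = ∫_0^∞ Q_Ω^m(t) dt and T_m(Ω) = Σ_{k=0}^∞ g_{m,Ω}(k). -/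
open MeasureTheory ENNReal Filter Topology

namespace RWAux
open RandomWalkSpace Set ProbabilityTheory

variable {X : Type*} [MeasurableSpace X] {m : X → Measure X} {ν : Measure X} {Ω A B E : Set X}

/-- the kernel associated to a random walk -/
noncomputable def ker (m : X → Measure X) (hm : IsRandomWalk m) : Kernel X X :=
  ⟨m, Measure.measurable_measure.2 hm.2⟩

lemma ker_apply (hm : IsRandomWalk m) (x : X) : ker m hm x = m x := rfl

instance : Nonempty ℕ := inferInstance

lemma ker_markov (hm : IsRandomWalk m) : IsMarkovKernel (ker m hm) :=
  ⟨fun x => hm.1 x⟩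

lemma meas_M2 (hm : IsRandomWalk m) (hA : MeasurableSet A) {F : X × X → ℝ≥0∞}
    (hF : Measurable F) : Measurable fun x => ∫⁻ y in A, F (x, y) ∂(m x) := by
  haveI := ker_markov hm
  have h : ∀ x, ∫⁻ y in A, F (x, y) ∂(m x)
      = ∫⁻ y, A.indicator (fun y => F (x, y)) y ∂((ker m hm) x) := by
    intro x
    rw [ker_apply, lintegral_indicator hA]
  simp_rw [h]
  have : Measurable fun p : X × X => A.indicator (fun y => F (p.1, y)) p.2 := by
    have : (fun p : X × X => A.indicator (fun y => F (p.1, y)) p.2)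
        = fun p : X × X => (A.indicator (1 : X → ℝ≥0∞) p.2) * F p := by
      ext p
      by_cases hp : p.2 ∈ A <;> simp [Set.indicator_of_mem, Set.indicator_of_notMem, hp]
    rw [this]
    exact ((measurable_one.indicator hA).comp measurable_snd).mul hF
  exact Measurable.lintegral_kernel_prod_right' this

lemma meas_M (hm : IsRandomWalk m) (hA : MeasurableSet A) {ψ : X → ℝ≥0∞}
    (hψ : Measurable ψ) : Measurable fun x => ∫⁻ y in A, ψ y ∂(m x) :=
  meas_M2 hm hA (hψ.comp measurable_snd)

lemma lintegral_symm (hm : IsRandomWalk m) (hrev : Reversible m ν) [SigmaFinite ν]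
    {F : X × X → ℝ≥0∞} (hF : Measurable F) :
    ∫⁻ x, ∫⁻ y, F (x, y) ∂(m x) ∂ν = ∫⁻ x, ∫⁻ y, F (y, x) ∂(m x) ∂ν := by
  haveI := ker_markov hm
  set κ := ker m hm
  set μ := ν ⊗ₘ κ with hμ
  have hswap : μ.map Prod.swap = μ := by
    set C : Set (Set (X × X)) := Set.image2 (· ×ˢ ·) {s : Set X | MeasurableSet s}
      {t : Set X | MeasurableSet t} with hC
    refine Measure.FiniteSpanningSetsIn.ext generateFrom_prod.symm isPiSystem_prod ?_ ?_
    · -- finite spanning sets for μ.map Prod.swap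
      refine ⟨fun n => (Set.univ : Set X) ×ˢ (ν.toFiniteSpanningSetsIn.set n), ?_, ?_, ?_⟩
      · intro n
        exact Set.mem_image2_of_mem (Set.mem_setOf.2 MeasurableSet.univ)
          (ν.toFiniteSpanningSetsIn.set_mem n)
      · intro n
        have hsn := ν.toFiniteSpanningSetsIn.set_mem n
        rw [Measure.map_apply measurable_swap (MeasurableSet.univ.prod hsn),
          Set.preimage_swap_prod, Measure.compProd_apply_prod hsn MeasurableSet.univ]
        have : ∫⁻ a in ν.toFiniteSpanningSetsIn.set n, κ a Set.univ ∂ν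
            = ν (ν.toFiniteSpanningSetsIn.set n) := by
          have : ∀ a, κ a Set.univ = 1 := fun a => measure_univ
          simp [this]
        rw [this]
        exact ν.toFiniteSpanningSetsIn.finite n
      · rw [← Set.prod_iUnion, ν.toFiniteSpanningSetsIn.spanning, Set.univ_prod_univ]
    · rintro s ⟨A, hA, B, hB, rfl⟩
      rw [Measure.map_apply measurable_swap (hA.prod hB), Set.preimage_swap_prod,
        Measure.compProd_apply_prod hB hA, Measure.compProd_apply_prod hA hB]
      exact (hrev B A hB hA).trans rfl
  have hk : ∀ x, m x = κ x := fun _ => rfl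
  simp_rw [hk]
  calc ∫⁻ x, ∫⁻ y, F (x, y) ∂(κ x) ∂ν = ∫⁻ p, F p ∂μ := (Measure.lintegral_compProd hF).symm
    _ = ∫⁻ p, F p ∂(μ.map Prod.swap) := by rw [hswap]
    _ = ∫⁻ p, F (Prod.swap p) ∂μ := lintegral_map hF measurable_swap
    _ = ∫⁻ x, ∫⁻ y, F (y, x) ∂(κ x) ∂ν := Measure.lintegral_compProd (hF.comp measurable_swap)

lemma symm_mul (hm : IsRandomWalk m) (hrev : Reversible m ν) [SigmaFinite ν]
    (hA : MeasurableSet A) (hB : MeasurableSet B) {ψ χ : X → ℝ≥0∞}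
    (hψ : Measurable ψ) (hχ : Measurable χ) :
    ∫⁻ x in A, ψ x * ∫⁻ y in B, χ y ∂(m x) ∂ν
      = ∫⁻ x in B, χ x * ∫⁻ y in A, ψ y ∂(m x) ∂ν := by
  set F : X × X → ℝ≥0∞ := fun p => A.indicator ψ p.1 * B.indicator χ p.2 with hF
  have hFm : Measurable F := ((hψ.indicator hA).comp measurable_fst).mul
    ((hχ.indicator hB).comp measurable_snd)
  have h1 : ∫⁻ x, ∫⁻ y, F (x, y) ∂(m x) ∂ν
      = ∫⁻ x in A, ψ x * ∫⁻ y in B, χ y ∂(m x) ∂ν := by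
    have : ∀ x, ∫⁻ y, F (x, y) ∂(m x)
        = A.indicator (fun x => ψ x * ∫⁻ y in B, χ y ∂(m x)) x := by
      intro x
      rw [show (fun y => F (x, y)) = fun y => A.indicator ψ x * B.indicator χ y from rfl,
        lintegral_const_mul _ (hχ.indicator hB), lintegral_indicator hB]
      by_cases hx : x ∈ A <;>
        simp [Set.indicator_of_mem, Set.indicator_of_notMem, hx]
    simp_rw [this]
    rw [lintegral_indicator hA]
  have h2 : ∫⁻ x, ∫⁻ y, F (y, x) ∂(m x) ∂ν
      = ∫⁻ x in B, χ x * ∫⁻ y in A, ψ y ∂(m x) ∂ν := by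
    have : ∀ x, ∫⁻ y, F (y, x) ∂(m x)
        = B.indicator (fun x => χ x * ∫⁻ y in A, ψ y ∂(m x)) x := by
      intro x
      have hrw : (fun y => F (y, x)) = fun y => B.indicator χ x * A.indicator ψ y := by
        ext y; simp [hF]; ring
      rw [hrw, lintegral_const_mul _ (hψ.indicator hA), lintegral_indicator hA]
      by_cases hx : x ∈ B <;>
        simp [Set.indicator_of_mem, Set.indicator_of_notMem, hx]
    simp_rw [this]
    rw [lintegral_indicator hB]
  rw [← h1, ← h2]
  exact lintegral_symm hm hrev hFm

lemma survival_measurable (hm : IsRandomWalk m) (hΩ : MeasurableSet Ω) (n : ℕ) :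
    Measurable (survival m Ω n) := by
  induction n with
  | zero => exact measurable_const
  | succ n ih => exact meas_M hm hΩ ih

lemma survival_le_one (hm : IsRandomWalk m) (n : ℕ) (x : X) : survival m Ω n x ≤ 1 := by
  induction n generalizing x with
  | zero => exact le_rfl
  | succ n ih =>
    haveI := hm.1 x
    calc survival m Ω (n + 1) x = ∫⁻ y in Ω, survival m Ω n y ∂(m x) := rfl
      _ ≤ ∫⁻ _ in Ω, 1 ∂(m x) := lintegral_mono ih
      _ = m x Ω := setLIntegral_one Ω
      _ ≤ 1 := prob_le_one

lemma survival_succ_le (hm : IsRandomWalk m) (n : ℕ) (x : X) :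
    survival m Ω (n + 1) x ≤ survival m Ω n x := by
  induction n generalizing x with
  | zero =>
    haveI := hm.1 x
    calc survival m Ω 1 x = ∫⁻ _ in Ω, 1 ∂(m x) := rfl
      _ = m x Ω := setLIntegral_one Ω
      _ ≤ 1 := prob_le_one
  | succ n ih => exact lintegral_mono fun y => ih y

lemma survival_antitone (hm : IsRandomWalk m) (x : X) :
    Antitone fun n => survival m Ω n x :=
  antitone_nat_of_succ_le fun n => survival_succ_le hm n x

lemma ae_null_kernel (hm : IsRandomWalk m) (hrev : Reversible m ν)
    (hA : MeasurableSet A) (hE : MeasurableSet E) (hE0 : ν E = 0) :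
    ∀ᵐ x ∂ν.restrict A, m x E = 0 := by
  have h : ∫⁻ x in A, m x E ∂ν = 0 := by
    rw [hrev A E hA hE, Measure.restrict_eq_zero.2 hE0, lintegral_zero_measure]
  exact (lintegral_eq_zero_iff (hm.2 E hE)).1 h

lemma measurableSet_mBoundary (hm : IsRandomWalk m) (hΩ : MeasurableSet Ω) :
    MeasurableSet (mBoundary m Ω) := by
  have : mBoundary m Ω = Ωᶜ ∩ (fun x => m x Ω) ⁻¹' Set.Ioi 0 := by
    ext x; simp [mBoundary, Set.mem_setOf_eq]
  rw [this]
  exact hΩ.compl.inter (hm.2 Ω hΩ measurableSet_Ioi)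

lemma measurableSet_mClosure (hm : IsRandomWalk m) (hΩ : MeasurableSet Ω) :
    MeasurableSet (mClosure m Ω) :=
  hΩ.union (measurableSet_mBoundary hm hΩ)

lemma ae_m_closure_one (hm : IsRandomWalk m) (hrev : Reversible m ν)
    (hΩ : MeasurableSet Ω) : ∀ᵐ x ∂ν.restrict Ω, m x (mClosure m Ω) = 1 := by
  have hΩm := measurableSet_mClosure hm hΩ
  have h : ∫⁻ x in Ω, m x (mClosure m Ω)ᶜ ∂ν = 0 := by
    rw [hrev Ω (mClosure m Ω)ᶜ hΩ hΩm.compl]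
    have : ∫⁻ x in (mClosure m Ω)ᶜ, m x Ω ∂ν = ∫⁻ _ in (mClosure m Ω)ᶜ, 0 ∂ν := by
      refine setLIntegral_congr_fun hΩm.compl (fun x hx => ?_)
      by_contra hne
      exact hx (Or.inr ⟨fun hxΩ => hx (Or.inl hxΩ), pos_iff_ne_zero.2 hne⟩)
    rw [this, lintegral_zero]
  have h2 := (lintegral_eq_zero_iff (hm.2 _ hΩm.compl)).1 h
  filter_upwards [h2] with x hx
  haveI := hm.1 x
  exact (prob_compl_eq_zero_iff hΩm).1 hx

lemma Mcong (hm : IsRandomWalk m) (hrev : Reversible m ν) (hΩ : MeasurableSet Ω)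
    {ψ χ : X → ℝ≥0∞} (h : ψ =ᵐ[ν.restrict Ω] χ) :
    (fun x => ∫⁻ y in Ω, ψ y ∂(m x)) =ᵐ[ν.restrict Ω] fun x => ∫⁻ y in Ω, χ y ∂(m x) := by
  have hD : ν ({y | ψ y ≠ χ y} ∩ Ω) = 0 := by
    have := h
    rw [EventuallyEq, ae_iff] at this
    rwa [Measure.restrict_apply' hΩ] at this
  obtain ⟨E, hDE, hEmeas, hE0⟩ := exists_measurable_superset_of_null hD
  filter_upwards [ae_null_kernel hm hrev hΩ hEmeas hE0] with x hx
  refine lintegral_congr_ae ?_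
  rw [EventuallyEq, ae_iff, Measure.restrict_apply' hΩ]
  exact measure_mono_null (fun y hy => hDE ⟨hy.1, hy.2⟩) hx

lemma poisson_lintegral_one (k : ℕ) :
    ∫⁻ t in Set.Ioi (0 : ℝ), ENNReal.ofReal (Real.exp (-t) * t ^ k / (Nat.factorial k)) = 1 := by
  have hint : IntegrableOn (fun t : ℝ => Real.exp (-t) * t ^ k / (Nat.factorial k))
      (Set.Ioi (0 : ℝ)) := by
    have h := Real.GammaIntegral_convergent (s := (k : ℝ) + 1) (by positivity)
    have heq : (fun x : ℝ => Real.exp (-x) * x ^ ((k : ℝ) + 1 - 1))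
        = fun x : ℝ => Real.exp (-x) * x ^ k := by
      ext x
      norm_num [Real.rpow_natCast]
    rw [heq] at h
    exact h.div_const _
  have hnn : 0 ≤ᵐ[volume.restrict (Set.Ioi (0:ℝ))]
      fun t : ℝ => Real.exp (-t) * t ^ k / (Nat.factorial k) := by
    filter_upwards [ae_restrict_mem measurableSet_Ioi] with t ht
    have : (0:ℝ) < t := ht
    positivity
  rw [← ofReal_integral_eq_lintegral_ofReal hint hnn]
  have hval : ∫ t in Set.Ioi (0:ℝ), Real.exp (-t) * t ^ k / (Nat.factorial k) = 1 := by
    rw [integral_div]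
    have h := (Real.Gamma_eq_integral (s := (k : ℝ) + 1) (by positivity)).symm
    have heq : (fun x : ℝ => Real.exp (-x) * x ^ ((k : ℝ) + 1 - 1))
        = fun x : ℝ => Real.exp (-x) * x ^ k := by
      ext x
      norm_num [Real.rpow_natCast]
    rw [heq] at h
    rw [h, Real.Gamma_nat_eq_factorial]
    exact div_self (by positivity)
  rw [hval, ENNReal.ofReal_one]

lemma heat_integral :
    ∫⁻ t in Set.Ioi (0 : ℝ), heatContent m ν Ω t = ∑' k : ℕ, gseq m ν Ω k := by
  unfold heatContent
  have hmeas : ∀ k : ℕ, Measurable fun t : ℝ =>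
      ENNReal.ofReal (Real.exp (-t) * t ^ k / (Nat.factorial k)) := by
    intro k
    apply Measurable.ennreal_ofReal
    fun_prop
  rw [lintegral_tsum fun k => ((hmeas k).const_mul _).aemeasurable]
  refine tsum_congr fun k => ?_
  rw [lintegral_const_mul _ (hmeas k), poisson_lintegral_one k, mul_one]

lemma sfun_fixed (hm : IsRandomWalk m) (hΩ : MeasurableSet Ω) (x : X) :
    ∫⁻ y in Ω, (⨅ n, survival m Ω n y) ∂(m x) = ⨅ n, survival m Ω n x := by
  haveI := hm.1 x
  rw [lintegral_iInf (fun n => survival_measurable hm hΩ n)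
    (fun a b hab y => survival_antitone hm y hab) ?fin]
  case fin =>
    have : ∫⁻ y in Ω, survival m Ω 0 y ∂(m x) = m x Ω := setLIntegral_one Ω
    rw [this]
    exact (lt_of_le_of_lt prob_le_one ENNReal.one_lt_top).ne
  have hrw : ∀ n, ∫⁻ y in Ω, survival m Ω n y ∂(m x) = survival m Ω (n + 1) x := fun n => rfl
  simp_rw [hrw]
  exact le_antisymm (le_iInf fun n => (iInf_le _ n).trans (survival_succ_le hm n x))
    (le_iInf fun n => iInf_le _ (n + 1))

set_option maxHeartbeats 1000000 in
lemma sfun_eq_zero (hm : IsRandomWalk m) (hrev : Reversible m ν) [SigmaFinite ν]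
    (hΩ : MeasurableSet Ω) (h2 : ν (mClosure m Ω) < ⊤)
    (hpoinc : PoincareInequality m ν Ω 2) :
    ∀ᵐ x ∂ν.restrict Ω, (⨅ n, survival m Ω n x) = 0 := by
  obtain ⟨lam, hlam, hP⟩ := hpoinc
  have hΩm : MeasurableSet (mClosure m Ω) := measurableSet_mClosure hm hΩ
  have hsub : Ω ⊆ mClosure m Ω := Set.subset_union_left
  have hbd : MeasurableSet (mBoundary m Ω) := measurableSet_mBoundary hm hΩ
  set s : X → ℝ≥0∞ := fun x => ⨅ n, survival m Ω n x with hsdef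
  have hsm : Measurable s := Measurable.iInf fun n => survival_measurable hm hΩ n
  have hs1 : ∀ x, s x ≤ 1 := fun x => (iInf_le _ 0)
  have hsne : ∀ x, s x ≠ ⊤ := fun x => ((hs1 x).trans_lt ENNReal.one_lt_top).ne
  set u : X → ℝ := Ω.indicator fun x => (s x).toReal with hudef
  have hum : Measurable u := hsm.ennreal_toReal.indicator hΩ
  have hu0 : ∀ x, 0 ≤ u x := fun x => by
    by_cases hx : x ∈ Ω <;>
      simp [hudef, Set.indicator_of_mem, Set.indicator_of_notMem, hx, ENNReal.toReal_nonneg]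
  have hu1 : ∀ x, u x ≤ 1 := fun x => by
    by_cases hx : x ∈ Ω
    · simp only [hudef, Set.indicator_of_mem hx]
      exact (ENNReal.toReal_mono ENNReal.one_ne_top (hs1 x)).trans_eq ENNReal.toReal_one
    · simp [hudef, Set.indicator_of_notMem hx]
  haveI : IsFiniteMeasure (ν.restrict (mClosure m Ω)) :=
    ⟨by rwa [Measure.restrict_apply_univ]⟩
  have hInL : InLp0 m ν Ω 2 u := by
    constructor
    · exact MemLp.of_bound hum.aestronglyMeasurable 1 (ae_of_all _ fun x => by
        rw [Real.norm_eq_abs, abs_of_nonneg (hu0 x)]; exact hu1 x)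
    · filter_upwards [ae_restrict_mem hbd] with x hx
      exact Set.indicator_of_notMem hx.1 _
  have hPu := hP u hInL
  set σ : X → ℝ≥0∞ := Ω.indicator s with hσdef
  have hσm : Measurable σ := hsm.indicator hΩ
  have huσ : ∀ x, ENNReal.ofReal (u x) = σ x := fun x => by
    by_cases hx : x ∈ Ω
    · simp only [hudef, hσdef, Set.indicator_of_mem hx]
      exact ENNReal.ofReal_toReal (hsne x)
    · simp [hudef, hσdef, Set.indicator_of_notMem hx]
  set I : ℝ≥0∞ := ∫⁻ x in Ω, s x * s x ∂ν with hIdef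
  -- pointwise square expansion
  have hpt : ∀ x y, ENNReal.ofReal (|u y - u x| ^ (2:ℝ)) + 2 * (σ x * σ y)
      = σ x * σ x + σ y * σ y := by
    intro x y
    have h1 : |u y - u x| ^ (2:ℝ) = (u x ^ 2 + u y ^ 2) - 2 * (u x * u y) := by
      rw [show (2:ℝ) = ((2:ℕ):ℝ) by norm_num, Real.rpow_natCast, sq_abs]
      ring
    have hrw1 : ENNReal.ofReal (2 * (u x * u y)) = 2 * (σ x * σ y) := by
      rw [ENNReal.ofReal_mul (by norm_num : (0:ℝ) ≤ 2),
        ENNReal.ofReal_mul (hu0 x), huσ x, huσ y, ENNReal.ofReal_ofNat]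
    have hrw2 : ENNReal.ofReal (u x ^ 2 + u y ^ 2) = σ x * σ x + σ y * σ y := by
      rw [ENNReal.ofReal_add (by positivity) (by positivity), sq, sq,
        ENNReal.ofReal_mul (hu0 x), ENNReal.ofReal_mul (hu0 y), huσ x, huσ y]
    have hle : ENNReal.ofReal (2 * (u x * u y)) ≤ ENNReal.ofReal (u x ^ 2 + u y ^ 2) :=
      ENNReal.ofReal_le_ofReal (by nlinarith [sq_nonneg (u x - u y)])
    calc ENNReal.ofReal (|u y - u x| ^ (2:ℝ)) + 2 * (σ x * σ y)
        = (ENNReal.ofReal (u x ^ 2 + u y ^ 2) - ENNReal.ofReal (2 * (u x * u y)))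
            + ENNReal.ofReal (2 * (u x * u y)) := by
          rw [h1, ENNReal.ofReal_sub _ (by have h1 := hu0 x; have h2 := hu0 y; positivity), hrw1]
      _ = ENNReal.ofReal (u x ^ 2 + u y ^ 2) := tsub_add_cancel_of_le hle
      _ = σ x * σ x + σ y * σ y := hrw2
  -- fixed point for σ-integral
  have hfix2 : ∀ x, ∫⁻ y in mClosure m Ω, σ y ∂(m x) = s x := by
    intro x
    calc ∫⁻ y in mClosure m Ω, σ y ∂(m x)
        = ∫⁻ y in Ω, s y ∂((m x).restrict (mClosure m Ω)) := lintegral_indicator hΩ s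
      _ = ∫⁻ y, s y ∂(((m x).restrict (mClosure m Ω)).restrict Ω) := rfl
      _ = ∫⁻ y in Ω, s y ∂(m x) := by
          rw [Measure.restrict_restrict hΩ, Set.inter_eq_left.2 hsub]
      _ = s x := sfun_fixed hm hΩ x
  have hdisj : Disjoint Ω (mBoundary m Ω) := by
    rw [Set.disjoint_left]; exact fun x hx hx2 => hx2.1 hx
  have hzero_bd : ∀ g : X → ℝ≥0∞, (∀ x ∈ mBoundary m Ω, g x = 0) →
      ∫⁻ x in mClosure m Ω, g x ∂ν = ∫⁻ x in Ω, g x ∂ν := by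
    intro g hg
    rw [show mClosure m Ω = Ω ∪ mBoundary m Ω from rfl, lintegral_union hbd hdisj,
      setLIntegral_congr_fun hbd hg, lintegral_zero, add_zero]
  have hσ_bd : ∀ x ∈ mBoundary m Ω, σ x = 0 := fun x hx =>
    Set.indicator_of_notMem hx.1 _
  have hIfin : I ≠ ⊤ := by
    have : I ≤ ν Ω := by
      have h1 : ∫⁻ x in Ω, s x * s x ∂ν ≤ ∫⁻ _ in Ω, 1 ∂ν :=
        lintegral_mono fun x => mul_le_one' (hs1 x) (hs1 x)
      rwa [setLIntegral_one] at h1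
    exact (this.trans_lt ((measure_mono hsub).trans_lt h2)).ne
  -- measurability of the energy integrand
  have hjm : Measurable fun p : X × X => ENNReal.ofReal (|u p.2 - u p.1| ^ (2:ℝ)) := by
    apply Measurable.ennreal_ofReal
    apply Measurable.pow
    · exact ((hum.comp measurable_snd).sub (hum.comp measurable_fst)).abs
    · exact measurable_const
  have hEm : Measurable fun x => ∫⁻ y in mClosure m Ω,
      ENNReal.ofReal (|u y - u x| ^ (2:ℝ)) ∂(m x) := meas_M2 hm hΩm hjm
  -- pointwise sum identity integrated in y
  have hE1 : ∀ x, (∫⁻ y in mClosure m Ω, ENNReal.ofReal (|u y - u x| ^ (2:ℝ)) ∂(m x))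
      + 2 * (σ x * s x)
      = σ x * σ x * (m x) (mClosure m Ω) + ∫⁻ y in mClosure m Ω, σ y * σ y ∂(m x) := by
    intro x
    have h2σ : ∫⁻ y in mClosure m Ω, 2 * (σ x * σ y) ∂(m x) = 2 * (σ x * s x) := by
      simp_rw [← mul_assoc]
      rw [lintegral_const_mul _ hσm, hfix2, mul_assoc]
    have hmeasy : Measurable fun y => ENNReal.ofReal (|u y - u x| ^ (2:ℝ)) := by
      apply Measurable.ennreal_ofReal
      exact ((hum.sub measurable_const).abs).pow measurable_const
    calc (∫⁻ y in mClosure m Ω, ENNReal.ofReal (|u y - u x| ^ (2:ℝ)) ∂(m x)) + 2 * (σ x * s x)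
        = ∫⁻ y in mClosure m Ω,
            (ENNReal.ofReal (|u y - u x| ^ (2:ℝ)) + 2 * (σ x * σ y)) ∂(m x) := by
          rw [lintegral_add_left hmeasy, h2σ]
      _ = ∫⁻ y in mClosure m Ω, (σ x * σ x + σ y * σ y) ∂(m x) :=
          lintegral_congr fun y => hpt x y
      _ = σ x * σ x * (m x) (mClosure m Ω) + ∫⁻ y in mClosure m Ω, σ y * σ y ∂(m x) := by
          rw [lintegral_add_left measurable_const, setLIntegral_const]
  -- integral versions
  have h2I : ∫⁻ x in mClosure m Ω, 2 * (σ x * s x) ∂ν = 2 * I := by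
    rw [hzero_bd _ (fun x hx => by rw [hσ_bd x hx, zero_mul, mul_zero])]
    have : ∀ᵐ x ∂ν.restrict Ω, 2 * (σ x * s x) = 2 * (s x * s x) := by
      filter_upwards [ae_restrict_mem hΩ] with x hx
      rw [hσdef, Set.indicator_of_mem hx]
    rw [lintegral_congr_ae this, lintegral_const_mul (f := fun x => s x * s x) _ (hsm.mul hsm)]
  have hIx : ∫⁻ x in mClosure m Ω, σ x * σ x * (m x) (mClosure m Ω) ∂ν = I := by
    rw [hzero_bd _ (fun x hx => by rw [hσ_bd x hx, zero_mul, zero_mul])]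
    refine lintegral_congr_ae ?_
    filter_upwards [ae_m_closure_one hm hrev hΩ, ae_restrict_mem hΩ] with x h1 hx
    rw [h1, mul_one, hσdef, Set.indicator_of_mem hx]
  have hIy : ∫⁻ x in mClosure m Ω, ∫⁻ y in mClosure m Ω, σ y * σ y ∂(m x) ∂ν = I := by
    have hsym := symm_mul hm hrev hΩm hΩm (ψ := fun _ => (1:ℝ≥0∞))
      (χ := fun y => σ y * σ y) measurable_const (hσm.mul hσm)
    simp_rw [one_mul] at hsym
    rw [hsym]
    have : ∀ x, σ x * σ x * ∫⁻ _ in mClosure m Ω, (1:ℝ≥0∞) ∂(m x)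
        = σ x * σ x * (m x) (mClosure m Ω) := by
      intro x; rw [setLIntegral_one]
    simp_rw [this]
    exact hIx
  have hEsum : energy m ν Ω 2 u + 2 * I = I + I := by
    calc energy m ν Ω 2 u + 2 * I
        = ∫⁻ x in mClosure m Ω, ((∫⁻ y in mClosure m Ω,
            ENNReal.ofReal (|u y - u x| ^ (2:ℝ)) ∂(m x)) + 2 * (σ x * s x)) ∂ν := by
          rw [lintegral_add_left hEm, h2I]; rfl
      _ = ∫⁻ x in mClosure m Ω, (σ x * σ x * (m x) (mClosure m Ω)
            + ∫⁻ y in mClosure m Ω, σ y * σ y ∂(m x)) ∂ν := lintegral_congr hE1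
      _ = I + I := by
          rw [lintegral_add_left (f := fun x => σ x * σ x * (m x) (mClosure m Ω))
              ((hσm.mul hσm).mul (hm.2 _ hΩm)), hIx, hIy]
  have henergy0 : energy m ν Ω 2 u = 0 := by
    have h2Ifin : 2 * I ≠ ⊤ := ENNReal.mul_ne_top (by norm_num) hIfin
    have : energy m ν Ω 2 u + 2 * I = 0 + 2 * I := by
      rw [hEsum, zero_add, two_mul]
    exact WithTop.add_right_cancel h2Ifin this
  -- conclude from the Poincaré inequality
  have hLHS : ∫⁻ x in Ω, ENNReal.ofReal (|u x| ^ (2:ℝ)) ∂ν = I := by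
    refine setLIntegral_congr_fun hΩ (fun x hx => ?_)
    rw [abs_of_nonneg (hu0 x), show (2:ℝ) = ((2:ℕ):ℝ) by norm_num, Real.rpow_natCast, sq,
      ENNReal.ofReal_mul (hu0 x), huσ x, hσdef, Set.indicator_of_mem hx]
  rw [hLHS, henergy0, nonpos_iff_eq_zero, mul_eq_zero] at hPu
  have hI0 : I = 0 := hPu.resolve_left (by
    simp [ENNReal.ofReal_eq_zero, not_le, hlam])
  have := (lintegral_eq_zero_iff (hsm.mul hsm : Measurable fun x => s x * s x)).1 hI0
  filter_upwards [this] with x hx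
  exact mul_self_eq_zero.1 hx

noncomputable def iterM (m : X → Measure X) (Ω : Set X) (φ : X → ℝ≥0∞) : ℕ → X → ℝ≥0∞
  | 0 => φ
  | n + 1 => fun x => ∫⁻ y in Ω, iterM m Ω φ n y ∂(m x)

lemma iterM_measurable (hm : IsRandomWalk m) (hΩ : MeasurableSet Ω) {φ : X → ℝ≥0∞}
    (hφ : Measurable φ) : ∀ n, Measurable (iterM m Ω φ n)
  | 0 => hφ
  | n + 1 => meas_M hm hΩ (iterM_measurable hm hΩ hφ n)

set_option maxHeartbeats 1000000 in
lemma stress_recursion (hm : IsRandomWalk m) (hrev : Reversible m ν)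
    (hΩ : MeasurableSet Ω) (h2 : ν (mClosure m Ω) < ⊤)
    (f : X → ℝ) (hf : IsStressFunction m ν Ω f) :
    ∃ φ : X → ℝ≥0∞, Measurable φ ∧ (∀ x, φ x ≠ ⊤) ∧
      (∫⁻ x in Ω, φ x ∂ν = ENNReal.ofReal (∫ x in Ω, f x ∂ν)) ∧
      (∫⁻ x in Ω, φ x ∂ν ≠ ⊤) ∧
      (∀ᵐ x ∂ν.restrict Ω, φ x = 1 + ∫⁻ y in Ω, φ y ∂(m x)) := by
  have hΩm : MeasurableSet (mClosure m Ω) := measurableSet_mClosure hm hΩ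
  have hsub : Ω ⊆ mClosure m Ω := Set.subset_union_left
  have hbd : MeasurableSet (mBoundary m Ω) := measurableSet_mBoundary hm hΩ
  haveI : IsFiniteMeasure (ν.restrict (mClosure m Ω)) :=
    ⟨by rwa [Measure.restrict_apply_univ]⟩
  have hsm' : AEStronglyMeasurable f (ν.restrict (mClosure m Ω)) := hf.1.1.1
  set f' : X → ℝ := hsm'.mk f with hf'def
  have hf'm : Measurable f' := hsm'.stronglyMeasurable_mk.measurable
  have hff' : f =ᵐ[ν.restrict (mClosure m Ω)] f' := hsm'.ae_eq_mk
  set φ : X → ℝ≥0∞ := Ω.indicator fun y => ENNReal.ofReal (f' y) with hφdef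
  have hφm : Measurable φ := (ENNReal.measurable_ofReal.comp hf'm).indicator hΩ
  have hφlt : ∀ y, φ y < ⊤ := fun y => by
    by_cases hy : y ∈ Ω
    · simp only [hφdef, Set.indicator_of_mem hy]; exact ENNReal.ofReal_lt_top
    · simp [hφdef, Set.indicator_of_notMem hy]
  have hfint : Integrable f (ν.restrict (mClosure m Ω)) :=
    MemLp.integrable (by rw [ENNReal.ofReal_ofNat]; exact one_le_two) hf.1.1
  -- the bad set
  have hD1 : ν ({y | f y ≠ f' y} ∩ mClosure m Ω) = 0 := by
    have h := hff'
    rw [EventuallyEq, ae_iff, Measure.restrict_apply' hΩm] at h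
    exact h
  have hD2 : ν ({y | ¬ 0 ≤ f y} ∩ mClosure m Ω) = 0 := by
    have h := hf.2.1
    rw [ae_iff, Measure.restrict_apply' hΩm] at h
    exact h
  have hD3 : ν ({y | f y ≠ 0} ∩ mBoundary m Ω) = 0 := by
    have h := hf.1.2
    rw [ae_iff, Measure.restrict_apply' hbd] at h
    exact h
  have hD : ν (({y | f y ≠ f' y} ∩ mClosure m Ω) ∪ (({y | ¬ 0 ≤ f y} ∩ mClosure m Ω)
      ∪ ({y | f y ≠ 0} ∩ mBoundary m Ω))) = 0 :=
    measure_union_null hD1 (measure_union_null hD2 hD3)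
  obtain ⟨E, hDE, hEmeas, hE0⟩ := exists_measurable_superset_of_null hD
  have hmE := ae_null_kernel hm hrev hΩ hEmeas hE0
  have hmc := ae_m_closure_one hm hrev hΩ
  have hres_mono : ν.restrict Ω ≤ ν.restrict (mClosure m Ω) :=
    Measure.restrict_mono hsub le_rfl
  have hfeq : ∀ᵐ x ∂ν.restrict Ω, f x = f' x := ae_mono hres_mono hff'
  have hfnn : ∀ᵐ x ∂ν.restrict Ω, 0 ≤ f x := ae_mono hres_mono hf.2.1
  have hφf : ∀ᵐ x ∂ν.restrict Ω, ENNReal.ofReal (f x) = φ x := by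
    filter_upwards [hfeq, ae_restrict_mem hΩ] with x h1 h2
    rw [hφdef, Set.indicator_of_mem h2, h1]
  -- integral identity
  have hint : Integrable f (ν.restrict Ω) := hfint.mono_measure hres_mono
  have hφint : ∫⁻ x in Ω, φ x ∂ν = ENNReal.ofReal (∫ x in Ω, f x ∂ν) := by
    rw [ofReal_integral_eq_lintegral_ofReal hint hfnn]
    exact (lintegral_congr_ae hφf).symm
  refine ⟨φ, hφm, fun y => (hφlt y).ne, hφint, by rw [hφint]; exact ENNReal.ofReal_ne_top, ?_⟩
  -- the recursion
  filter_upwards [hmE, hmc, hfeq, hfnn, hf.2.2, ae_restrict_mem hΩ]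
    with x hxE hxc hxf hxnn hxs hxΩ
  haveI := hm.1 x
  set μx := (m x).restrict (mClosure m Ω) with hμxdef
  haveI : IsProbabilityMeasure μx := ⟨by rw [Measure.restrict_apply_univ]; exact hxc⟩
  have hμe : μx E = 0 :=
    le_antisymm (le_trans (Measure.restrict_apply_le _ _) hxE.le) zero_le
  have hgood : ∀ᵐ y ∂μx, f y = (φ y).toReal ∧ ENNReal.ofReal (f y) = φ y := by
    filter_upwards [ae_restrict_mem hΩm, measure_eq_zero_iff_ae_notMem.1 hμe] with y hy hyE
    have hyD : y ∉ ({y | f y ≠ f' y} ∩ mClosure m Ω) ∪ (({y | ¬ 0 ≤ f y} ∩ mClosure m Ω)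
        ∪ ({y | f y ≠ 0} ∩ mBoundary m Ω)) := fun hyD => hyE (hDE hyD)
    simp only [Set.mem_union, Set.mem_inter_iff, Set.mem_setOf_eq, not_or] at hyD
    by_cases hyΩ : y ∈ Ω
    · have h1 : f y = f' y := not_not.1 fun hne => hyD.1 ⟨hne, hy⟩
      have h2 : 0 ≤ f y := not_not.1 fun hne => hyD.2.1 ⟨hne, hy⟩
      rw [hφdef, Set.indicator_of_mem hyΩ, ← h1]
      exact ⟨(ENNReal.toReal_ofReal h2).symm, rfl⟩
    · have hybd : y ∈ mBoundary m Ω := hy.resolve_left hyΩ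
      have h3 : f y = 0 := not_not.1 fun hne => hyD.2.2 ⟨hne, hybd⟩
      rw [hφdef, Set.indicator_of_notMem hyΩ, h3]
      simp
  -- integrability from the stress equation
  have hsint : Integrable (fun y => f y - f x) μx := by
    by_contra hcon
    rw [integral_undef hcon] at hxs
    norm_num at hxs
  have hfintx : Integrable f μx := by
    have h := hsint.add (integrable_const (f x))
    have heq : ((fun y => f y - f x) + fun _ => f x) = f := by
      ext y; simp
    rwa [heq] at h
  have heq : f x = 1 + ∫ y, f y ∂μx := by
    rw [integral_sub hfintx (integrable_const _), integral_const] at hxs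
    simp only [measureReal_def, measure_univ, ENNReal.toReal_one, one_smul] at hxs
    linarith
  have hIφ : ∫ y, f y ∂μx = (∫⁻ y, φ y ∂μx).toReal := by
    rw [integral_congr_ae (hgood.mono fun y hy => hy.1)]
    exact integral_toReal hφm.aemeasurable (ae_of_all _ hφlt)
  have hLfin : ∫⁻ y, φ y ∂μx ≠ ⊤ := by
    rw [lintegral_congr_ae (hgood.mono fun y hy => hy.2.symm)]
    have hb : ∀ y, ENNReal.ofReal (f y) ≤ ‖f y‖ₑ := fun y => by
      rw [Real.enorm_eq_ofReal_abs]
      exact ENNReal.ofReal_le_ofReal (le_abs_self _)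
    exact ((lintegral_mono hb).trans_lt hfintx.2).ne
  have hres : ∫⁻ y, φ y ∂μx = ∫⁻ y in Ω, φ y ∂(m x) := by
    calc ∫⁻ y, φ y ∂μx = ∫⁻ y in Ω, ENNReal.ofReal (f' y) ∂μx := by
          rw [hφdef]; exact lintegral_indicator hΩ (fun y => ENNReal.ofReal (f' y))
      _ = ∫⁻ y, ENNReal.ofReal (f' y) ∂((μx).restrict Ω) := rfl
      _ = ∫⁻ y in Ω, ENNReal.ofReal (f' y) ∂(m x) := by
          rw [hμxdef, Measure.restrict_restrict hΩ, Set.inter_eq_left.2 hsub]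
      _ = ∫⁻ y in Ω, φ y ∂(m x) := setLIntegral_congr_fun hΩ (fun y hy => by
          rw [hφdef]; exact (Set.indicator_of_mem hy (fun y => ENNReal.ofReal (f' y))).symm)
  calc φ x = ENNReal.ofReal (f x) := by rw [hφdef, Set.indicator_of_mem hxΩ, hxf]
    _ = ENNReal.ofReal (1 + (∫⁻ y, φ y ∂μx).toReal) := by rw [heq, hIφ]
    _ = 1 + ∫⁻ y, φ y ∂μx := by
        rw [ENNReal.ofReal_add zero_le_one ENNReal.toReal_nonneg, ENNReal.ofReal_one,
          ENNReal.ofReal_toReal hLfin]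
    _ = 1 + ∫⁻ y in Ω, φ y ∂(m x) := by rw [hres]

set_option maxHeartbeats 1000000 in
lemma torsion_eq_tsum (hm : IsRandomWalk m) (hrev : Reversible m ν) [SigmaFinite ν]
    (hΩ : MeasurableSet Ω) (h2 : ν (mClosure m Ω) < ⊤)
    (hpoinc : PoincareInequality m ν Ω 2)
    (f : X → ℝ) (hf : IsStressFunction m ν Ω f) :
    ENNReal.ofReal (∫ x in Ω, f x ∂ν) = ∑' k : ℕ, gseq m ν Ω k := by
  obtain ⟨φ, hφm, hφtop, hφf, hφfin, hrec⟩ := stress_recursion hm hrev hΩ h2 f hf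
  have hWm := iterM_measurable hm hΩ hφm
  have hWsucc : ∀ n, iterM m Ω φ n =ᵐ[ν.restrict Ω]
      fun x => survival m Ω n x + iterM m Ω φ (n + 1) x := by
    intro n
    induction n with
    | zero =>
      filter_upwards [hrec] with x hx
      exact hx
    | succ n ih =>
      filter_upwards [Mcong hm hrev hΩ ih] with x hx
      calc iterM m Ω φ (n + 1) x = ∫⁻ y in Ω, iterM m Ω φ n y ∂(m x) := rfl
        _ = ∫⁻ y in Ω, (survival m Ω n y + iterM m Ω φ (n + 1) y) ∂(m x) := hx
        _ = survival m Ω (n + 1) x + iterM m Ω φ (n + 2) x := by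
            rw [lintegral_add_left (survival_measurable hm hΩ n)]; rfl
  have hRsucc : ∀ n, ∫⁻ x in Ω, iterM m Ω φ n x ∂ν
      = gseq m ν Ω n + ∫⁻ x in Ω, iterM m Ω φ (n + 1) x ∂ν := by
    intro n
    rw [lintegral_congr_ae (hWsucc n),
      lintegral_add_left (survival_measurable hm hΩ n)]
    rfl
  have hsum : ∀ n, ∫⁻ x in Ω, φ x ∂ν
      = (∑ k ∈ Finset.range n, gseq m ν Ω k) + ∫⁻ x in Ω, iterM m Ω φ n x ∂ν := by
    intro n
    induction n with
    | zero => simp [iterM]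
    | succ n ih =>
      rw [ih, hRsucc n, Finset.sum_range_succ, add_assoc]
  have hdual : ∀ n k, ∫⁻ x in Ω, iterM m Ω φ n x * survival m Ω k x ∂ν
      = ∫⁻ x in Ω, φ x * survival m Ω (n + k) x ∂ν := by
    intro n
    induction n with
    | zero => intro k; rw [Nat.zero_add]; rfl
    | succ n ih =>
      intro k
      have h1 : ∫⁻ x in Ω, iterM m Ω φ (n + 1) x * survival m Ω k x ∂ν
          = ∫⁻ x in Ω, survival m Ω k x * ∫⁻ y in Ω, iterM m Ω φ n y ∂(m x) ∂ν :=
        lintegral_congr fun x => mul_comm _ _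
      rw [h1, symm_mul hm hrev hΩ hΩ (survival_measurable hm hΩ k) (hWm n)]
      have h2 : ∫⁻ x in Ω, iterM m Ω φ n x * ∫⁻ y in Ω, survival m Ω k y ∂(m x) ∂ν
          = ∫⁻ x in Ω, iterM m Ω φ n x * survival m Ω (k + 1) x ∂ν := rfl
      rw [h2, ih (k + 1), show n + (k + 1) = n + 1 + k by omega]
  have hR : ∀ n, ∫⁻ x in Ω, iterM m Ω φ n x ∂ν
      = ∫⁻ x in Ω, φ x * survival m Ω n x ∂ν := by
    intro n
    have h0 : ∀ x, iterM m Ω φ n x = iterM m Ω φ n x * survival m Ω 0 x := fun x =>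
      (mul_one _).symm
    calc ∫⁻ x in Ω, iterM m Ω φ n x ∂ν
        = ∫⁻ x in Ω, iterM m Ω φ n x * survival m Ω 0 x ∂ν := lintegral_congr h0
      _ = ∫⁻ x in Ω, φ x * survival m Ω (n + 0) x ∂ν := hdual n 0
      _ = ∫⁻ x in Ω, φ x * survival m Ω n x ∂ν := by rw [Nat.add_zero]
  have hiInf : ⨅ n, ∫⁻ x in Ω, φ x * survival m Ω n x ∂ν = 0 := by
    rw [← lintegral_iInf (f := fun n x => φ x * survival m Ω n x)
      (fun n => hφm.mul (survival_measurable hm hΩ n))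
      (fun a b hab x => mul_le_mul_right (survival_antitone hm x hab) _)
      (by
        have : ∀ x, φ x * survival m Ω 0 x = φ x := fun x => mul_one _
        simp_rw [this]
        exact hφfin)]
    have h0 : ∀ᵐ x ∂ν.restrict Ω, (⨅ n, φ x * survival m Ω n x) = 0 := by
      filter_upwards [sfun_eq_zero hm hrev hΩ h2 hpoinc] with x hx
      rw [← ENNReal.mul_iInf fun htop _ => absurd htop (hφtop x), hx, mul_zero]
    rw [lintegral_congr_ae h0, lintegral_zero]
  have hiInfW : ⨅ n, ∫⁻ x in Ω, iterM m Ω φ n x ∂ν = 0 := by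
    rw [iInf_congr hR]
    exact hiInf
  have htsum : ∑' k : ℕ, gseq m ν Ω k = ∫⁻ x in Ω, φ x ∂ν := by
    apply le_antisymm
    · rw [ENNReal.tsum_eq_iSup_nat]
      exact iSup_le fun n => (hsum n) ▸ le_self_add
    · have h1 : ∀ n, ∫⁻ x in Ω, φ x ∂ν
          ≤ (∑' k : ℕ, gseq m ν Ω k) + ∫⁻ x in Ω, iterM m Ω φ n x ∂ν := fun n => by
        rw [hsum n]
        exact add_le_add_left (ENNReal.sum_le_tsum _) _
      calc ∫⁻ x in Ω, φ x ∂ν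
          ≤ ⨅ n, ((∑' k : ℕ, gseq m ν Ω k) + ∫⁻ x in Ω, iterM m Ω φ n x ∂ν) := le_iInf h1
        _ = (∑' k : ℕ, gseq m ν Ω k) + ⨅ n, ∫⁻ x in Ω, iterM m Ω φ n x ∂ν :=
            ENNReal.add_iInf.symm
        _ = ∑' k : ℕ, gseq m ν Ω k := by rw [hiInfW, add_zero]
  rw [← hφf, htsum]

end RWAux
/-- `T_m(Ω) = ∫_0^∞ Q_Ω^m(t) dt` and `T_m(Ω) = Σ_k g_{m,Ω}(k)`. -/
theorem torsion_eq_heatContent_integral {X : Type*} [MeasurableSpace X]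
    (m : X → Measure X) (ν : Measure X) [SigmaFinite ν]
    (hm : RandomWalkSpace.IsRandomWalk m) (hrev : RandomWalkSpace.Reversible m ν)
    (Ω : Set X) (hΩ : MeasurableSet Ω)
    (hconn : RandomWalkSpace.mConnected m ν Ω)
    (hconnm : RandomWalkSpace.mConnected m ν (RandomWalkSpace.mClosure m Ω))
    (h0 : 0 < ν Ω) (h1 : ν Ω < ν (RandomWalkSpace.mClosure m Ω))
    (h2 : ν (RandomWalkSpace.mClosure m Ω) < ⊤)
    (hpoinc : RandomWalkSpace.PoincareInequality m ν Ω 2)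
    (f : X → ℝ) (hf : RandomWalkSpace.IsStressFunction m ν Ω f) :
    ENNReal.ofReal (∫ x in Ω, f x ∂ν) =
        ∫⁻ t in Set.Ioi (0 : ℝ), RandomWalkSpace.heatContent m ν Ω t ∧
      ENNReal.ofReal (∫ x in Ω, f x ∂ν) = ∑' k : ℕ, RandomWalkSpace.gseq m ν Ω k := by
  have h := RWAux.torsion_eq_tsum hm hrev hΩ h2 hpoinc f hf
  refine ⟨?_, h⟩
  rw [RWAux.heat_integral]
  exact h
end

section
/- Let [X,B,m,ν] be a reversible random walk space and let Ω₁ ⊆ Ω₂ be sets in B, each satisfying the standing assumptions (Ω_i and (Ω_i)_m m-connected, 0 < ν(Ω_i) < ν((Ω_i)_m) < ∞, and Ω_i satisfying a 2-Poincaré inequality). Then T_m(Ω₁) ≤ T_m(Ω₂). -/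
open MeasureTheory ENNReal Filter Topology

section TorsionAux

open RandomWalkSpace ProbabilityTheory

variable {X : Type*} [MeasurableSpace X]

namespace TorsionAux

lemma measurableSet_mClosure {m : X → Measure X} {Ω : Set X}
    (hm : IsRandomWalk m) (hΩ : MeasurableSet Ω) : MeasurableSet (mClosure m Ω) := by
  have hb : mBoundary m Ω = Ωᶜ ∩ (fun x => m x Ω) ⁻¹' Set.Ioi 0 := by
    ext x
    simp [mBoundary, Set.mem_setOf_eq, Set.mem_Ioi]
  exact hΩ.union (hb ▸ (hΩ.compl.inter ((hm.2 Ω hΩ) measurableSet_Ioi)))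

lemma measurableSet_mBoundary {m : X → Measure X} {Ω : Set X}
    (hm : IsRandomWalk m) (hΩ : MeasurableSet Ω) : MeasurableSet (mBoundary m Ω) := by
  have hb : mBoundary m Ω = Ωᶜ ∩ (fun x => m x Ω) ⁻¹' Set.Ioi 0 := by
    ext x
    simp [mBoundary, Set.mem_setOf_eq, Set.mem_Ioi]
  exact hb ▸ (hΩ.compl.inter ((hm.2 Ω hΩ) measurableSet_Ioi))

/-- The kernel `x ↦ (m x).restrict (mClosure m Ω)` (junk if not measurable). -/
noncomputable def rwK (m : X → Measure X) (Ω : Set X) : Kernel X X := by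
  classical exact
    if h : Measurable (fun x => (m x).restrict (mClosure m Ω)) then ⟨_, h⟩ else 0

lemma rwK_apply {m : X → Measure X} {Ω : Set X}
    (hm : IsRandomWalk m) (hΩ : MeasurableSet Ω) (x : X) :
    rwK m Ω x = (m x).restrict (mClosure m Ω) := by
  have h : Measurable (fun x => (m x).restrict (mClosure m Ω)) := by
    apply Measure.measurable_of_measurable_coe
    intro s hs
    simp_rw [Measure.restrict_apply hs]
    exact hm.2 _ (hs.inter (measurableSet_mClosure hm hΩ))
  simp only [rwK]
  rw [dif_pos h]
  rfl

lemma isFiniteKernel_rwK {m : X → Measure X} {Ω : Set X}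
    (hm : IsRandomWalk m) (hΩ : MeasurableSet Ω) : IsFiniteKernel (rwK m Ω) := by
  refine ⟨⟨1, ENNReal.one_lt_top, fun x => ?_⟩⟩
  rw [rwK_apply hm hΩ, Measure.restrict_apply_univ]
  haveI := hm.1 x
  exact prob_le_one

/-- the symmetric pair measure on `Ω_m × Ω_m`. -/
noncomputable def pairM (m : X → Measure X) (ν : Measure X) (Ω : Set X) : Measure (X × X) :=
  (ν.restrict (mClosure m Ω)) ⊗ₘ rwK m Ω

lemma isFiniteMeasure_restrict {ν : Measure X} {S : Set X} (hfin : ν S ≠ ⊤) :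
    IsFiniteMeasure (ν.restrict S) :=
  ⟨by rwa [Measure.restrict_apply_univ, lt_top_iff_ne_top]⟩

lemma lintegral_pairM {m : X → Measure X} {ν : Measure X} {Ω : Set X}
    (hm : IsRandomWalk m) (hΩ : MeasurableSet Ω) (hfin : ν (mClosure m Ω) ≠ ⊤)
    {F : X × X → ℝ≥0∞} (hF : Measurable F) :
    ∫⁻ p, F p ∂(pairM m ν Ω)
      = ∫⁻ x in mClosure m Ω, ∫⁻ y in mClosure m Ω, F (x, y) ∂(m x) ∂ν := by
  haveI := isFiniteKernel_rwK hm hΩ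
  haveI := isFiniteMeasure_restrict hfin
  rw [pairM, Measure.lintegral_compProd hF]
  refine lintegral_congr fun x => ?_
  rw [rwK_apply hm hΩ]

lemma pairM_prod {m : X → Measure X} {ν : Measure X} {Ω : Set X}
    (hm : IsRandomWalk m) (hΩ : MeasurableSet Ω) (hfin : ν (mClosure m Ω) ≠ ⊤)
    {s t : Set X} (hs : MeasurableSet s) (ht : MeasurableSet t) :
    pairM m ν Ω (s ×ˢ t)
      = ∫⁻ x in s ∩ mClosure m Ω, m x (t ∩ mClosure m Ω) ∂ν := by
  haveI := isFiniteKernel_rwK hm hΩ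
  haveI := isFiniteMeasure_restrict hfin
  rw [pairM, Measure.compProd_apply_prod hs ht]
  rw [Measure.restrict_restrict hs]
  refine lintegral_congr fun x => ?_
  rw [rwK_apply hm hΩ, Measure.restrict_apply ht]

lemma map_swap_pairM {m : X → Measure X} {ν : Measure X} {Ω : Set X}
    (hm : IsRandomWalk m) (hrev : Reversible m ν) (hΩ : MeasurableSet Ω)
    (hfin : ν (mClosure m Ω) ≠ ⊤) :
    (pairM m ν Ω).map Prod.swap = pairM m ν Ω := by
  haveI := isFiniteKernel_rwK hm hΩ
  haveI := isFiniteMeasure_restrict hfin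
  haveI : IsFiniteMeasure (pairM m ν Ω) := by rw [pairM]; infer_instance
  haveI : IsFiniteMeasure ((pairM m ν Ω).map Prod.swap) := by
    refine ⟨?_⟩
    rw [Measure.map_apply measurable_swap MeasurableSet.univ]
    exact measure_lt_top _ _
  have hc := measurableSet_mClosure hm hΩ
  have key : ∀ s t : Set X, MeasurableSet s → MeasurableSet t →
      (pairM m ν Ω).map Prod.swap (s ×ˢ t) = pairM m ν Ω (s ×ˢ t) := by
    intro s t hs ht
    rw [Measure.map_apply measurable_swap (hs.prod ht)]
    have : Prod.swap ⁻¹' (s ×ˢ t) = t ×ˢ s := by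
      ext p; simp [Set.mem_prod, and_comm]
    rw [this, pairM_prod hm hΩ hfin ht hs, pairM_prod hm hΩ hfin hs ht]
    exact hrev _ _ (ht.inter hc) (hs.inter hc)
  refine ext_of_generate_finite _ generateFrom_prod.symm isPiSystem_prod ?_ ?_
  · rintro u ⟨s, hs, t, ht, rfl⟩
    exact key s t hs ht
  · have := key Set.univ Set.univ MeasurableSet.univ MeasurableSet.univ
    simpa [Set.univ_prod_univ] using this

lemma map_fst_pairM_le {m : X → Measure X} {ν : Measure X} {Ω : Set X}
    (hm : IsRandomWalk m) (hΩ : MeasurableSet Ω) (hfin : ν (mClosure m Ω) ≠ ⊤) :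
    (pairM m ν Ω).map Prod.fst ≤ ν.restrict (mClosure m Ω) := by
  have hc := measurableSet_mClosure hm hΩ
  refine Measure.le_iff.2 fun s hs => ?_
  rw [Measure.map_apply measurable_fst hs]
  have : Prod.fst ⁻¹' s = s ×ˢ (Set.univ : Set X) := by ext p; simp
  rw [this, pairM_prod hm hΩ hfin hs MeasurableSet.univ]
  calc ∫⁻ x in s ∩ mClosure m Ω, m x (Set.univ ∩ mClosure m Ω) ∂ν
      ≤ ∫⁻ _ in s ∩ mClosure m Ω, 1 ∂ν := by
        refine lintegral_mono fun x => ?_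
        haveI := hm.1 x
        exact prob_le_one
    _ = ν (s ∩ mClosure m Ω) := by simp
    _ = (ν.restrict (mClosure m Ω)) s := (Measure.restrict_apply hs).symm

lemma map_snd_pairM_le {m : X → Measure X} {ν : Measure X} {Ω : Set X}
    (hm : IsRandomWalk m) (hrev : Reversible m ν) (hΩ : MeasurableSet Ω)
    (hfin : ν (mClosure m Ω) ≠ ⊤) :
    (pairM m ν Ω).map Prod.snd ≤ ν.restrict (mClosure m Ω) := by
  have h1 : (pairM m ν Ω).map Prod.snd
      = ((pairM m ν Ω).map Prod.swap).map Prod.fst := by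
    rw [Measure.map_map measurable_fst measurable_swap]
    rfl
  rw [h1, map_swap_pairM hm hrev hΩ hfin]
  exact map_fst_pairM_le hm hΩ hfin

lemma memLp_fst {m : X → Measure X} {ν : Measure X} {Ω : Set X}
    (hm : IsRandomWalk m) (hΩ : MeasurableSet Ω) (hfin : ν (mClosure m Ω) ≠ ⊤)
    {u : X → ℝ} (hu : Measurable u) (hu2 : MemLp u 2 (ν.restrict (mClosure m Ω))) :
    MemLp (fun p : X × X => u p.1) 2 (pairM m ν Ω) := by
  have h1 : MemLp u 2 ((pairM m ν Ω).map Prod.fst) :=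
    hu2.mono_measure (map_fst_pairM_le hm hΩ hfin)
  exact (memLp_map_measure_iff hu.stronglyMeasurable.aestronglyMeasurable
    measurable_fst.aemeasurable).1 h1

lemma memLp_snd {m : X → Measure X} {ν : Measure X} {Ω : Set X}
    (hm : IsRandomWalk m) (hrev : Reversible m ν) (hΩ : MeasurableSet Ω)
    (hfin : ν (mClosure m Ω) ≠ ⊤)
    {u : X → ℝ} (hu : Measurable u) (hu2 : MemLp u 2 (ν.restrict (mClosure m Ω))) :
    MemLp (fun p : X × X => u p.2) 2 (pairM m ν Ω) := by
  have h1 : MemLp u 2 ((pairM m ν Ω).map Prod.snd) :=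
    hu2.mono_measure (map_snd_pairM_le hm hrev hΩ hfin)
  exact (memLp_map_measure_iff hu.stronglyMeasurable.aestronglyMeasurable
    measurable_snd.aemeasurable).1 h1

lemma integrable_mul_L2 {α : Type*} [MeasurableSpace α] {μ : Measure α} {f g : α → ℝ}
    (hf : MemLp f 2 μ) (hg : MemLp g 2 μ) : Integrable (fun x => f x * g x) μ := by
  have h : MemLp (f • g) 1 μ := hg.smul hf
  have := memLp_one_iff_integrable.1 h
  exact this

lemma ae_null {m : X → Measure X} {ν : Measure X}
    (hm : IsRandomWalk m) (hrev : Reversible m ν) {N : Set X}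
    (hN : MeasurableSet N) (hN0 : ν N = 0) :
    ∀ᵐ x ∂ν, m x N = 0 := by
  have h := hrev Set.univ N MeasurableSet.univ hN
  have h2 : ∫⁻ x in N, m x Set.univ ∂ν = ν N := by
    calc ∫⁻ x in N, m x Set.univ ∂ν = ∫⁻ _ in N, 1 ∂ν := by
          refine setLIntegral_congr_fun hN (fun x _ => ?_)
          haveI := hm.1 x
          exact measure_univ
      _ = ν N := by simp
  have h3 : ∫⁻ x, m x N ∂ν = 0 := by
    rw [← setLIntegral_univ, h, h2, hN0]
  have h4 := (lintegral_eq_zero_iff (hm.2 N hN)).1 h3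
  filter_upwards [h4] with x hx using hx

lemma ae_boundary {m : X → Measure X} {ν : Measure X} {Ω : Set X}
    (hm : IsRandomWalk m) (hrev : Reversible m ν) (hΩ : MeasurableSet Ω) :
    ∀ᵐ x ∂ν, x ∈ Ω → m x ((mClosure m Ω)ᶜ) = 0 := by
  have hc := measurableSet_mClosure hm hΩ
  have h := hrev Ω (mClosure m Ω)ᶜ hΩ hc.compl
  have h2 : ∫⁻ x in (mClosure m Ω)ᶜ, m x Ω ∂ν = 0 := by
    rw [setLIntegral_congr_fun hc.compl (fun x hx => ?_), lintegral_zero]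
    by_contra hne
    exact hx (Or.inr ⟨fun h' => hx (Or.inl h'), pos_iff_ne_zero.mpr hne⟩)
  rw [h2] at h
  have h4 := (lintegral_eq_zero_iff (hm.2 _ hc.compl)).1 h
  exact (ae_restrict_iff' hΩ).1 (by filter_upwards [h4] with x hx using hx)

lemma ae_restrict_union {ν : Measure X} {s t : Set X} {P : X → Prop}
    (h1 : ∀ᵐ x ∂ν.restrict s, P x) (h2 : ∀ᵐ x ∂ν.restrict t, P x) :
    ∀ᵐ x ∂ν.restrict (s ∪ t), P x := by
  rw [ae_iff] at h1 h2 ⊢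
  have hle := (Measure.le_iff'.1 (Measure.restrict_union_le (μ := ν) (s := s) (s' := t)))
    {a | ¬P a}
  simp only [Measure.add_apply, h1, h2, add_zero] at hle
  exact le_antisymm hle zero_le

lemma pairing {m : X → Measure X} {ν : Measure X} [SigmaFinite ν]
    (hm : IsRandomWalk m) (hrev : Reversible m ν) {Ω : Set X} (hΩ : MeasurableSet Ω)
    (hfin : ν (mClosure m Ω) ≠ ⊤) {f g w : X → ℝ}
    (hg : Measurable g) (hw : Measurable w)
    (hgf : g =ᵐ[ν.restrict (mClosure m Ω)] f)
    (hf2 : MemLp f 2 (ν.restrict (mClosure m Ω)))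
    (hw2 : MemLp w 2 (ν.restrict (mClosure m Ω)))
    (hw0 : ∀ᵐ x ∂ν.restrict (mBoundary m Ω), w x = 0)
    (hEL : ∀ᵐ x ∂ν.restrict Ω, -∫ y in mClosure m Ω, (f y - f x) ∂(m x) = 1) :
    ∫ p, (g p.2 - g p.1) * (w p.2 - w p.1) ∂(pairM m ν Ω)
      = 2 * ∫ x in Ω, w x ∂ν := by
  haveI := isFiniteKernel_rwK hm hΩ
  haveI := isFiniteMeasure_restrict hfin
  have hc := measurableSet_mClosure hm hΩ
  have hbm := measurableSet_mBoundary hm hΩ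
  have hg2 : MemLp g 2 (ν.restrict (mClosure m Ω)) := (memLp_congr_ae hgf).2 hf2
  -- L² facts on the pair measure
  have hGf : MemLp (fun p : X × X => g p.1) 2 (pairM m ν Ω) := memLp_fst hm hΩ hfin hg hg2
  have hGs : MemLp (fun p : X × X => g p.2) 2 (pairM m ν Ω) :=
    memLp_snd hm hrev hΩ hfin hg hg2
  have hWf : MemLp (fun p : X × X => w p.1) 2 (pairM m ν Ω) := memLp_fst hm hΩ hfin hw hw2
  have hWs : MemLp (fun p : X × X => w p.2) 2 (pairM m ν Ω) :=
    memLp_snd hm hrev hΩ hfin hw hw2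
  have i22 : Integrable (fun p : X × X => g p.2 * w p.2) (pairM m ν Ω) :=
    integrable_mul_L2 hGs hWs
  have i21 : Integrable (fun p : X × X => g p.2 * w p.1) (pairM m ν Ω) :=
    integrable_mul_L2 hGs hWf
  have i12 : Integrable (fun p : X × X => g p.1 * w p.2) (pairM m ν Ω) :=
    integrable_mul_L2 hGf hWs
  have i11 : Integrable (fun p : X × X => g p.1 * w p.1) (pairM m ν Ω) :=
    integrable_mul_L2 hGf hWf
  -- swap invariance
  have hswap := map_swap_pairM hm hrev hΩ hfin
  have swap_int : ∀ F : X × X → ℝ, Measurable F →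
      ∫ p, F (Prod.swap p) ∂(pairM m ν Ω) = ∫ p, F p ∂(pairM m ν Ω) := by
    intro F hF
    calc ∫ p, F (Prod.swap p) ∂(pairM m ν Ω)
        = ∫ p, F p ∂((pairM m ν Ω).map Prod.swap) :=
          (integral_map measurable_swap.aemeasurable
            (by rw [hswap]; exact hF.stronglyMeasurable.aestronglyMeasurable)).symm
      _ = ∫ p, F p ∂(pairM m ν Ω) := by rw [hswap]
  have sA : ∫ p : X × X, g p.2 * w p.2 ∂(pairM m ν Ω)
      = ∫ p : X × X, g p.1 * w p.1 ∂(pairM m ν Ω) := by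
    have := swap_int (fun p => g p.1 * w p.1)
      ((hg.comp measurable_fst).mul (hw.comp measurable_fst))
    simpa using this
  have sC : ∫ p : X × X, g p.1 * w p.2 ∂(pairM m ν Ω)
      = ∫ p : X × X, g p.2 * w p.1 ∂(pairM m ν Ω) := by
    have := swap_int (fun p => g p.2 * w p.1)
      ((hg.comp measurable_snd).mul (hw.comp measurable_fst))
    simpa using this
  -- expansion
  have e1 : (fun p : X × X => (g p.2 - g p.1) * (w p.2 - w p.1))
      = fun p : X × X => (g p.2 * w p.2 - g p.2 * w p.1) - (g p.1 * w p.2 - g p.1 * w p.1) := by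
    funext p; ring
  have hexp : ∫ p, (g p.2 - g p.1) * (w p.2 - w p.1) ∂(pairM m ν Ω)
      = 2 * ((∫ p : X × X, g p.1 * w p.1 ∂(pairM m ν Ω))
          - ∫ p : X × X, g p.2 * w p.1 ∂(pairM m ν Ω)) := by
    have j2 : Integrable (fun p : X × X => g p.2 * w p.2 - g p.2 * w p.1) (pairM m ν Ω) :=
      i22.sub i21
    have j1 : Integrable (fun p : X × X => g p.1 * w p.2 - g p.1 * w p.1) (pairM m ν Ω) :=
      i12.sub i11
    rw [e1, integral_sub j2 j1, integral_sub i22 i21, integral_sub i12 i11, sA, sC]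
    ring
  -- the one-sided integral via the Euler–Lagrange equation
  have hR : Integrable (fun p : X × X => (g p.2 - g p.1) * w p.1) (pairM m ν Ω) := by
    have he : (fun p : X × X => (g p.2 - g p.1) * w p.1)
        = fun p : X × X => g p.2 * w p.1 - g p.1 * w p.1 := by funext p; ring
    rw [he]; exact i21.sub i11
  -- transfer the EL equation to g
  have hN0 : ν ({x | g x ≠ f x} ∩ mClosure m Ω) = 0 := by
    have h := hgf
    rw [EventuallyEq, ae_iff] at h
    rw [Measure.restrict_apply' hc] at h
    exact h
  obtain ⟨N, hN0N, hNm, hNnull⟩ := exists_measurable_superset_of_null hN0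
  have hker : ∀ᵐ x ∂ν, m x N = 0 := ae_null hm hrev hNm hNnull
  have hgfΩ : ∀ᵐ x ∂ν.restrict Ω, g x = f x :=
    hgf.filter_mono (ae_mono (Measure.restrict_mono Set.subset_union_left le_rfl))
  have hEL' : ∀ᵐ x ∂ν.restrict Ω, ∫ y in mClosure m Ω, (g y - g x) ∂(m x) = -1 := by
    filter_upwards [hEL, hgfΩ, ae_restrict_of_ae hker] with x h1 h2 h3
    have hgf' : g =ᵐ[(m x).restrict (mClosure m Ω)] f := by
      rw [EventuallyEq, ae_iff, Measure.restrict_apply' hc]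
      exact measure_mono_null (fun y hy => hN0N ⟨hy.1, hy.2⟩) h3
    have hae : (fun y => g y - g x) =ᵐ[(m x).restrict (mClosure m Ω)]
        (fun y => f y - f x) := by
      filter_upwards [hgf'] with y hy
      rw [hy, h2]
    rw [integral_congr_ae hae]
    linarith
  -- compute R by disintegration
  have hΦeq : ∀ x, (∫ y, (g y - g x) * w x ∂(rwK m Ω x))
      = (∫ y in mClosure m Ω, (g y - g x) ∂(m x)) * w x := by
    intro x
    rw [rwK_apply hm hΩ]
    exact integral_mul_const _ _
  have hRpair := hR
  rw [pairM] at hRpair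
  have step : ∫ p, (g p.2 - g p.1) * w p.1 ∂(pairM m ν Ω)
      = ∫ x in mClosure m Ω, (∫ y in mClosure m Ω, (g y - g x) ∂(m x)) * w x ∂ν := by
    rw [pairM, Measure.integral_compProd hRpair]
    exact integral_congr_ae (ae_of_all _ hΦeq)
  have hΦint : Integrable
      (fun x => (∫ y in mClosure m Ω, (g y - g x) ∂(m x)) * w x)
      (ν.restrict (mClosure m Ω)) := by
    have := hRpair.integral_compProd
    exact this.congr (ae_of_all _ hΦeq)
  have hdisj : Disjoint Ω (mBoundary m Ω) := by
    rw [Set.disjoint_left]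
    intro x hx hb
    exact hb.1 hx
  have hsplit : ∫ x in mClosure m Ω, (∫ y in mClosure m Ω, (g y - g x) ∂(m x)) * w x ∂ν
      = (∫ x in Ω, (∫ y in mClosure m Ω, (g y - g x) ∂(m x)) * w x ∂ν)
        + ∫ x in mBoundary m Ω, (∫ y in mClosure m Ω, (g y - g x) ∂(m x)) * w x ∂ν := by
    have hon : IntegrableOn
        (fun x => (∫ y in mClosure m Ω, (g y - g x) ∂(m x)) * w x) (mClosure m Ω) ν := hΦint
    exact setIntegral_union hdisj hbm (hon.mono_set Set.subset_union_left)
      (hon.mono_set Set.subset_union_right)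
  have hbdry : ∫ x in mBoundary m Ω, (∫ y in mClosure m Ω, (g y - g x) ∂(m x)) * w x ∂ν
      = 0 := by
    refine integral_eq_zero_of_ae ?_
    filter_upwards [hw0] with x hx
    simp [hx]
  have hΩpart : ∫ x in Ω, (∫ y in mClosure m Ω, (g y - g x) ∂(m x)) * w x ∂ν
      = - ∫ x in Ω, w x ∂ν := by
    have : ∫ x in Ω, (∫ y in mClosure m Ω, (g y - g x) ∂(m x)) * w x ∂ν
        = ∫ x in Ω, (-1 : ℝ) * w x ∂ν := by
      refine integral_congr_ae ?_
      filter_upwards [hEL'] with x hx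
      rw [hx]
    rw [this]
    simp [neg_one_mul, integral_neg]
  rw [hexp]
  have hBD : (∫ p : X × X, g p.2 * w p.1 ∂(pairM m ν Ω))
      - ∫ p : X × X, g p.1 * w p.1 ∂(pairM m ν Ω)
      = ∫ p, (g p.2 - g p.1) * w p.1 ∂(pairM m ν Ω) := by
    have he : (fun p : X × X => (g p.2 - g p.1) * w p.1)
        = fun p : X × X => g p.2 * w p.1 - g p.1 * w p.1 := by funext p; ring
    rw [he, integral_sub i21 i11]
  have hfinal : ∫ p, (g p.2 - g p.1) * w p.1 ∂(pairM m ν Ω) = - ∫ x in Ω, w x ∂ν := by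
    rw [step, hsplit, hbdry, hΩpart, add_zero]
  have := hBD.trans hfinal
  linarith

lemma transfer {m : X → Measure X} {ν : Measure X} [SigmaFinite ν]
    (hm : IsRandomWalk m) (hrev : Reversible m ν) {Ω Ω' : Set X}
    (hΩ : MeasurableSet Ω) (hΩ' : MeasurableSet Ω') (hsub : Ω' ⊆ Ω)
    (hfin : ν (mClosure m Ω) ≠ ⊤)
    {w : X → ℝ} (hw : Measurable w) (hsupp : ∀ x, x ∉ Ω' → w x = 0) :
    ∫⁻ p, ENNReal.ofReal ((w p.2 - w p.1) ^ 2) ∂(pairM m ν Ω)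
      = ∫⁻ x, ∫⁻ y, ENNReal.ofReal ((w y - w x) ^ 2) ∂(m x) ∂ν := by
  have hc := measurableSet_mClosure hm hΩ
  have hHmeas : Measurable (fun p : X × X => ENNReal.ofReal ((w p.2 - w p.1) ^ 2)) := by
    apply ENNReal.measurable_ofReal.comp
    exact ((hw.comp measurable_snd).sub (hw.comp measurable_fst)).pow_const 2
  rw [lintegral_pairM hm hΩ hfin hHmeas]
  have step2 : ∫⁻ x in (mClosure m Ω)ᶜ, (∫⁻ y, ENNReal.ofReal ((w y - w x) ^ 2) ∂(m x)) ∂ν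
      = 0 := by
    have hz : ∀ x ∈ (mClosure m Ω)ᶜ,
        (∫⁻ y, ENNReal.ofReal ((w y - w x) ^ 2) ∂(m x)) = 0 := by
      intro x hx
      have hxΩ : m x Ω = 0 := by
        by_contra hne
        exact hx (Or.inr ⟨fun h' => hx (Or.inl h'), pos_iff_ne_zero.mpr hne⟩)
      have hx' : x ∉ Ω' := fun h => hx (Or.inl (hsub h))
      have hrw : (fun y => ENNReal.ofReal ((w y - w x) ^ 2))
          = fun y => Set.indicator Ω' (fun y => ENNReal.ofReal ((w y - w x) ^ 2)) y := by
        funext y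
        by_cases hy : y ∈ Ω'
        · rw [Set.indicator_of_mem hy]
        · rw [Set.indicator_of_notMem hy]
          simp [hsupp y hy, hsupp x hx']
      rw [hrw, lintegral_indicator hΩ' _]
      have hres : (m x).restrict Ω' = 0 :=
        Measure.restrict_eq_zero.mpr (measure_mono_null hsub hxΩ)
      rw [hres, lintegral_zero_measure]
    calc ∫⁻ x in (mClosure m Ω)ᶜ, (∫⁻ y, ENNReal.ofReal ((w y - w x) ^ 2) ∂(m x)) ∂ν
        = ∫⁻ _ in (mClosure m Ω)ᶜ, 0 ∂ν :=
          setLIntegral_congr_fun hc.compl hz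
      _ = 0 := by simp
  have hbd := ae_boundary hm hrev hΩ
  have step3 : ∫⁻ x in mClosure m Ω, (∫⁻ y, ENNReal.ofReal ((w y - w x) ^ 2) ∂(m x)) ∂ν
      = ∫⁻ x in mClosure m Ω,
          (∫⁻ y in mClosure m Ω, ENNReal.ofReal ((w y - w x) ^ 2) ∂(m x)) ∂ν := by
    refine lintegral_congr_ae (ae_restrict_of_ae ?_)
    filter_upwards [hbd] with x hx
    have hsplit : ∫⁻ y, ENNReal.ofReal ((w y - w x) ^ 2) ∂(m x)
        = (∫⁻ y in mClosure m Ω, ENNReal.ofReal ((w y - w x) ^ 2) ∂(m x))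
          + ∫⁻ y in (mClosure m Ω)ᶜ, ENNReal.ofReal ((w y - w x) ^ 2) ∂(m x) :=
      (lintegral_add_compl _ hc).symm
    have hcomp : ∫⁻ y in (mClosure m Ω)ᶜ, ENNReal.ofReal ((w y - w x) ^ 2) ∂(m x)
        = ENNReal.ofReal ((w x) ^ 2) * m x ((mClosure m Ω)ᶜ) := by
      have : ∀ y ∈ (mClosure m Ω)ᶜ,
          ENNReal.ofReal ((w y - w x) ^ 2) = ENNReal.ofReal ((w x) ^ 2) := by
        intro y hy
        have hy' : y ∉ Ω' := fun h => hy (Or.inl (hsub h))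
        rw [hsupp y hy', zero_sub, neg_sq]
      rw [setLIntegral_congr_fun hc.compl this, setLIntegral_const]
    have hzero : ENNReal.ofReal ((w x) ^ 2) * m x ((mClosure m Ω)ᶜ) = 0 := by
      by_cases hxΩ' : x ∈ Ω'
      · rw [hx (hsub hxΩ'), mul_zero]
      · simp [hsupp x hxΩ']
    rw [hsplit, hcomp, hzero, add_zero]
  rw [← lintegral_add_compl (fun x => ∫⁻ y, ENNReal.ofReal ((w y - w x) ^ 2) ∂(m x)) hc,
    step2, add_zero, step3]

end TorsionAux

end TorsionAux

/-- monotonicity of the `m`-torsional rigidity: `Ω₁ ⊆ Ω₂ ⟹ T_m(Ω₁) ≤ T_m(Ω₂)`. -/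
theorem torsion_mono {X : Type*} [MeasurableSpace X]
    (m : X → Measure X) (ν : Measure X) [SigmaFinite ν]
    (hm : RandomWalkSpace.IsRandomWalk m) (hrev : RandomWalkSpace.Reversible m ν)
    (Ω₁ Ω₂ : Set X) (hsub : Ω₁ ⊆ Ω₂)
    (hΩ₁ : MeasurableSet Ω₁) (hΩ₂ : MeasurableSet Ω₂)
    (hconn₁ : RandomWalkSpace.mConnected m ν Ω₁)
    (hconnm₁ : RandomWalkSpace.mConnected m ν (RandomWalkSpace.mClosure m Ω₁))
    (h0₁ : 0 < ν Ω₁) (h1₁ : ν Ω₁ < ν (RandomWalkSpace.mClosure m Ω₁))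
    (h2₁ : ν (RandomWalkSpace.mClosure m Ω₁) < ⊤)
    (hpoinc₁ : RandomWalkSpace.PoincareInequality m ν Ω₁ 2)
    (hconn₂ : RandomWalkSpace.mConnected m ν Ω₂)
    (hconnm₂ : RandomWalkSpace.mConnected m ν (RandomWalkSpace.mClosure m Ω₂))
    (h0₂ : 0 < ν Ω₂) (h1₂ : ν Ω₂ < ν (RandomWalkSpace.mClosure m Ω₂))
    (h2₂ : ν (RandomWalkSpace.mClosure m Ω₂) < ⊤)
    (hpoinc₂ : RandomWalkSpace.PoincareInequality m ν Ω₂ 2)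
    (f₁ f₂ : X → ℝ)
    (hf₁ : RandomWalkSpace.IsStressFunction m ν Ω₁ f₁)
    (hf₂ : RandomWalkSpace.IsStressFunction m ν Ω₂ f₂) :
    ∫ x in Ω₁, f₁ x ∂ν ≤ ∫ x in Ω₂, f₂ x ∂ν := by
  open RandomWalkSpace TorsionAux in
  · have hfin₁ : ν (mClosure m Ω₁) ≠ ⊤ := h2₁.ne
    have hfin₂ : ν (mClosure m Ω₂) ≠ ⊤ := h2₂.ne
    have hc₁ := measurableSet_mClosure hm hΩ₁
    have hc₂ := measurableSet_mClosure hm hΩ₂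
    have hb₁ := measurableSet_mBoundary hm hΩ₁
    have hb₂ := measurableSet_mBoundary hm hΩ₂
    have h2eq : ENNReal.ofReal (2 : ℝ) = 2 := by norm_num
    have hMem₁ : MemLp f₁ 2 (ν.restrict (mClosure m Ω₁)) := by
      have := hf₁.1.1; rwa [h2eq] at this
    have hMem₂ : MemLp f₂ 2 (ν.restrict (mClosure m Ω₂)) := by
      have := hf₂.1.1; rwa [h2eq] at this
    -- measurable versions
    set ag₁ : AEStronglyMeasurable f₁ (ν.restrict (mClosure m Ω₁)) :=
      hMem₁.aestronglyMeasurable with hag₁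
    set ag₂ : AEStronglyMeasurable f₂ (ν.restrict (mClosure m Ω₂)) :=
      hMem₂.aestronglyMeasurable with hag₂
    set g₂ : X → ℝ := ag₂.mk f₂ with hg₂def
    have hg₂meas : Measurable g₂ := ag₂.stronglyMeasurable_mk.measurable
    have hgf₂ : f₂ =ᵐ[ν.restrict (mClosure m Ω₂)] g₂ := ag₂.ae_eq_mk
    set g₁ : X → ℝ := ag₁.mk f₁ with hg₁def
    have hg₁meas : Measurable g₁ := ag₁.stronglyMeasurable_mk.measurable
    have hgf₁ : f₁ =ᵐ[ν.restrict (mClosure m Ω₁)] g₁ := ag₁.ae_eq_mk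
    set wt : X → ℝ := Ω₁.indicator g₁ with hwtdef
    have hwt_meas : Measurable wt := hg₁meas.indicator hΩ₁
    have hwt_supp : ∀ x, x ∉ Ω₁ → wt x = 0 := fun x hx => Set.indicator_of_notMem hx _
    -- wt agrees a.e. with f₁ on the m-closure of Ω₁
    have hA : ∀ᵐ x ∂ν.restrict Ω₁, wt x = f₁ x := by
      have h1 : ∀ᵐ x ∂ν.restrict Ω₁, f₁ x = g₁ x :=
        hgf₁.filter_mono (ae_mono (Measure.restrict_mono Set.subset_union_left le_rfl))
      filter_upwards [h1, ae_restrict_mem hΩ₁] with x h h'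
      rw [hwtdef, Set.indicator_of_mem h', ← h]
    have hB : ∀ᵐ x ∂ν.restrict (mBoundary m Ω₁), wt x = f₁ x := by
      have h0 : ∀ᵐ x ∂ν.restrict (mBoundary m Ω₁), f₁ x = 0 := hf₁.1.2
      filter_upwards [h0, ae_restrict_mem hb₁] with x h h'
      rw [hwtdef, Set.indicator_of_notMem h'.1, h]
    have hwtf₁ : wt =ᵐ[ν.restrict (mClosure m Ω₁)] f₁ := by
      have := ae_restrict_union (ν := ν) (s := Ω₁) (t := mBoundary m Ω₁)
        (P := fun x => wt x = f₁ x) hA hB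
      exact this
    have hwt2₁ : MemLp wt 2 (ν.restrict (mClosure m Ω₁)) :=
      (memLp_congr_ae hwtf₁).2 hMem₁
    have hg₁Ω₁ : MemLp g₁ 2 (ν.restrict Ω₁) :=
      ((memLp_congr_ae hgf₁).1 hMem₁).mono_measure
        (Measure.restrict_mono Set.subset_union_left le_rfl)
    have hΩ₁sub₂ : Ω₁ ⊆ mClosure m Ω₂ := fun x hx => Or.inl (hsub hx)
    have hwt2₂ : MemLp wt 2 (ν.restrict (mClosure m Ω₂)) := by
      rw [hwtdef, memLp_indicator_iff_restrict hΩ₁, Measure.restrict_restrict hΩ₁,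
        Set.inter_eq_self_of_subset_left hΩ₁sub₂]
      exact hg₁Ω₁
    have hwt0₂ : ∀ᵐ x ∂ν.restrict (mBoundary m Ω₂), wt x = 0 := by
      filter_upwards [ae_restrict_mem hb₂] with x hx
      exact Set.indicator_of_notMem (fun hh => hx.1 (hsub hh)) _
    have hwt0₁ : ∀ᵐ x ∂ν.restrict (mBoundary m Ω₁), wt x = 0 := by
      filter_upwards [ae_restrict_mem hb₁] with x hx
      exact Set.indicator_of_notMem hx.1 _
    have hg₂2 : MemLp g₂ 2 (ν.restrict (mClosure m Ω₂)) := (memLp_congr_ae hgf₂).1 hMem₂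
    have hg₂0 : ∀ᵐ x ∂ν.restrict (mBoundary m Ω₂), g₂ x = 0 := by
      have h0 : ∀ᵐ x ∂ν.restrict (mBoundary m Ω₂), f₂ x = 0 := hf₂.1.2
      have h1 : ∀ᵐ x ∂ν.restrict (mBoundary m Ω₂), f₂ x = g₂ x :=
        hgf₂.filter_mono (ae_mono (Measure.restrict_mono Set.subset_union_right le_rfl))
      filter_upwards [h0, h1] with x h h'
      rw [← h', h]
    -- the three pairing identities
    have P1 := pairing hm hrev hΩ₂ hfin₂ hg₂meas hg₂meas hgf₂.symm hMem₂ hg₂2 hg₂0 hf₂.2.2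
    have P2 := pairing hm hrev hΩ₂ hfin₂ hg₂meas hwt_meas hgf₂.symm hMem₂ hwt2₂ hwt0₂ hf₂.2.2
    have P3 := pairing hm hrev hΩ₁ hfin₁ hwt_meas hwt_meas hwtf₁ hMem₁ hwt2₁ hwt0₁ hf₁.2.2
    -- transfer of the quadratic energy of wt
    have tr₁ := transfer hm hrev hΩ₁ hΩ₁ Set.Subset.rfl hfin₁ hwt_meas hwt_supp
    have tr₂ := transfer hm hrev hΩ₂ hΩ₁ hsub hfin₂ hwt_meas hwt_supp
    have hLL := tr₁.trans tr₂.symm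
    have hDwmeas : Measurable (fun p : X × X => wt p.2 - wt p.1) :=
      (hwt_meas.comp measurable_snd).sub (hwt_meas.comp measurable_fst)
    have hreal : ∀ π : Measure (X × X),
        ∫ p, (wt p.2 - wt p.1) * (wt p.2 - wt p.1) ∂π
          = (∫⁻ p, ENNReal.ofReal ((wt p.2 - wt p.1) ^ 2) ∂π).toReal := by
      intro π
      rw [integral_eq_lintegral_of_nonneg_ae (ae_of_all _ fun p => mul_self_nonneg _)
        (hDwmeas.mul hDwmeas).aestronglyMeasurable]
      congr 1
      refine lintegral_congr fun p => ?_
      rw [sq]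
    have hqeq : ∫ p, (wt p.2 - wt p.1) * (wt p.2 - wt p.1) ∂(pairM m ν Ω₂)
        = ∫ p, (wt p.2 - wt p.1) * (wt p.2 - wt p.1) ∂(pairM m ν Ω₁) := by
      rw [hreal (pairM m ν Ω₂), hreal (pairM m ν Ω₁), hLL]
    -- expansion of the nonnegative quadratic form
    have hDg : MemLp (fun p : X × X => g₂ p.2 - g₂ p.1) 2 (pairM m ν Ω₂) :=
      (memLp_snd hm hrev hΩ₂ hfin₂ hg₂meas hg₂2).sub (memLp_fst hm hΩ₂ hfin₂ hg₂meas hg₂2)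
    have hDw : MemLp (fun p : X × X => wt p.2 - wt p.1) 2 (pairM m ν Ω₂) :=
      (memLp_snd hm hrev hΩ₂ hfin₂ hwt_meas hwt2₂).sub (memLp_fst hm hΩ₂ hfin₂ hwt_meas hwt2₂)
    have iGG : Integrable
        (fun p : X × X => (g₂ p.2 - g₂ p.1) * (g₂ p.2 - g₂ p.1)) (pairM m ν Ω₂) :=
      integrable_mul_L2 hDg hDg
    have iGW : Integrable
        (fun p : X × X => (g₂ p.2 - g₂ p.1) * (wt p.2 - wt p.1)) (pairM m ν Ω₂) :=
      integrable_mul_L2 hDg hDw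
    have iWW : Integrable
        (fun p : X × X => (wt p.2 - wt p.1) * (wt p.2 - wt p.1)) (pairM m ν Ω₂) :=
      integrable_mul_L2 hDw hDw
    have hNonneg : (0 : ℝ) ≤ ∫ p, ((g₂ p.2 - g₂ p.1) - (wt p.2 - wt p.1))
        * ((g₂ p.2 - g₂ p.1) - (wt p.2 - wt p.1)) ∂(pairM m ν Ω₂) :=
      integral_nonneg fun p => mul_self_nonneg _
    have hExpand : ∫ p, ((g₂ p.2 - g₂ p.1) - (wt p.2 - wt p.1))
        * ((g₂ p.2 - g₂ p.1) - (wt p.2 - wt p.1)) ∂(pairM m ν Ω₂)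
        = (∫ p, (g₂ p.2 - g₂ p.1) * (g₂ p.2 - g₂ p.1) ∂(pairM m ν Ω₂))
          - 2 * (∫ p, (g₂ p.2 - g₂ p.1) * (wt p.2 - wt p.1) ∂(pairM m ν Ω₂))
          + ∫ p, (wt p.2 - wt p.1) * (wt p.2 - wt p.1) ∂(pairM m ν Ω₂) := by
      have e : (fun p : X × X => ((g₂ p.2 - g₂ p.1) - (wt p.2 - wt p.1))
            * ((g₂ p.2 - g₂ p.1) - (wt p.2 - wt p.1)))
          = fun p : X × X =>
              ((g₂ p.2 - g₂ p.1) * (g₂ p.2 - g₂ p.1)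
                - (g₂ p.2 - g₂ p.1) * (wt p.2 - wt p.1))
              - ((g₂ p.2 - g₂ p.1) * (wt p.2 - wt p.1)
                - (wt p.2 - wt p.1) * (wt p.2 - wt p.1)) := by
        funext p; ring
      have jA : Integrable (fun p : X × X =>
          (g₂ p.2 - g₂ p.1) * (g₂ p.2 - g₂ p.1)
            - (g₂ p.2 - g₂ p.1) * (wt p.2 - wt p.1)) (pairM m ν Ω₂) := iGG.sub iGW
      have jB : Integrable (fun p : X × X =>
          (g₂ p.2 - g₂ p.1) * (wt p.2 - wt p.1)
            - (wt p.2 - wt p.1) * (wt p.2 - wt p.1)) (pairM m ν Ω₂) := iGW.sub iWW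
      rw [e, integral_sub jA jB, integral_sub iGG iGW, integral_sub iGW iWW]
      ring
    -- identify the integrals
    have hT₂ : ∫ x in Ω₂, g₂ x ∂ν = ∫ x in Ω₂, f₂ x ∂ν := by
      refine integral_congr_ae ?_
      exact (hgf₂.filter_mono
        (ae_mono (Measure.restrict_mono Set.subset_union_left le_rfl))).symm
    have hwtΩ₁ : ∫ x in Ω₁, wt x ∂ν = ∫ x in Ω₁, f₁ x ∂ν := by
      have h1 : ∫ x in Ω₁, wt x ∂ν = ∫ x in Ω₁, g₁ x ∂ν := by
        refine setIntegral_congr_fun hΩ₁ fun x hx => ?_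
        rw [hwtdef, Set.indicator_of_mem hx]
      have h2 : ∫ x in Ω₁, g₁ x ∂ν = ∫ x in Ω₁, f₁ x ∂ν := by
        refine integral_congr_ae ?_
        exact (hgf₁.filter_mono
          (ae_mono (Measure.restrict_mono Set.subset_union_left le_rfl))).symm
      rw [h1, h2]
    have hwtΩ₂ : ∫ x in Ω₂, wt x ∂ν = ∫ x in Ω₁, f₁ x ∂ν := by
      rw [hwtdef, setIntegral_indicator hΩ₁, Set.inter_eq_self_of_subset_right hsub]
      have h2 : ∫ x in Ω₁, g₁ x ∂ν = ∫ x in Ω₁, f₁ x ∂ν := by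
        refine integral_congr_ae ?_
        exact (hgf₁.filter_mono
          (ae_mono (Measure.restrict_mono Set.subset_union_left le_rfl))).symm
      exact h2
    rw [hExpand, P1, P2, hqeq, P3, hT₂, hwtΩ₂, hwtΩ₁] at hNonneg
    linarith
end

section
/- Let [X,B,m,ν] be a reversible random walk space and Ω ∈ B with Ω and Ω_m m-connected, 0 < ν(Ω) < ν(Ω_m) < ∞, and Ω satisfying a 2-Poincaré inequality. Assume there exists an eigenfunction f associated to λ_{m,2}(Ω) (i.e. f ∈ L²(Ω_m,ν), f = 0 ν-a.e. on ∂_mΩ, −∫_{Ω_m}(f(y) − f(x)) dm_x(y) = λ_{m,2}(Ω) f(x) for ν-a.e. x ∈ Ω) and constants 0 < α ≤ α̃ with α ≤ f ≤ α̃ ν-a.e. on Ω. Then λ_{m,2}(Ω) = 1 − lim_{n→∞} (g_{m,Ω}(2n) / g_{m,Ω}(n))^{1/n}. -/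
open MeasureTheory ENNReal Filter Topology

section Aux
open RandomWalkSpace
variable {X : Type*} [MeasurableSpace X] (m : X → Measure X) (ν : Measure X)

lemma mBoundary_meas (hm : IsRandomWalk m) {Ω : Set X} (hΩ : MeasurableSet Ω) :
    MeasurableSet (mBoundary m Ω) := by
  have : mBoundary m Ω = Ωᶜ ∩ (fun x => m x Ω) ⁻¹' Set.Ioi 0 := by
    ext x; simp [mBoundary]
  rw [this]
  exact hΩ.compl.inter ((hm.2 Ω hΩ) measurableSet_Ioi)

lemma mClosure_meas (hm : IsRandomWalk m) {Ω : Set X} (hΩ : MeasurableSet Ω) :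
    MeasurableSet (mClosure m Ω) :=
  hΩ.union (mBoundary_meas m hm hΩ)

lemma null_transfer (hm : IsRandomWalk m) (hrev : Reversible m ν)
    {S N : Set X} (hS : MeasurableSet S) (hN : MeasurableSet N) (h0 : ν N = 0) :
    ∀ᵐ x ∂ν.restrict S, m x N = 0 := by
  have hz : ∫⁻ x in S, m x N ∂ν = 0 := by
    rw [hrev S N hS hN, setLIntegral_measure_zero _ _ h0]
  have := (lintegral_eq_zero_iff' ((hm.2 N hN).aemeasurable)).mp hz
  filter_upwards [this] with x hx using hx

lemma ae_transfer (hm : IsRandomWalk m) (hrev : Reversible m ν)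
    {S D : Set X} (hS : MeasurableSet S) (hD : MeasurableSet D) {p : X → Prop}
    (hp : ∀ᵐ x ∂ν.restrict D, p x) :
    ∀ᵐ x ∂ν.restrict S, ∀ᵐ y ∂(m x), y ∈ D → p y := by
  have hp' : ∀ᵐ x ∂ν, x ∈ D → p x := (ae_restrict_iff' hD).mp hp
  have hnull : ν {x | x ∈ D ∧ ¬ p x} = 0 := by
    refine measure_mono_null ?_ (ae_iff.mp hp')
    intro x hx
    simp only [Set.mem_setOf_eq] at hx ⊢
    tauto
  set N := toMeasurable ν {x | x ∈ D ∧ ¬ p x} with hNdef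
  have hNnull : ν N = 0 := by rw [hNdef, measure_toMeasurable]; exact hnull
  have := null_transfer m ν hm hrev hS (measurableSet_toMeasurable ν _) hNnull
  filter_upwards [this] with x hx
  have hae : ∀ᵐ y ∂(m x), y ∉ N := measure_eq_zero_iff_ae_notMem.mp hx
  filter_upwards [hae] with y hy hyD
  by_contra hpy
  exact hy (subset_toMeasurable ν _ ⟨hyD, hpy⟩)

lemma ae_mClosure_compl_null (hm : IsRandomWalk m) (hrev : Reversible m ν)
    {Ω : Set X} (hΩ : MeasurableSet Ω) :
    ∀ᵐ x ∂ν.restrict Ω, m x (mClosure m Ω)ᶜ = 0 := by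
  have hB : MeasurableSet (mClosure m Ω)ᶜ := (mClosure_meas m hm hΩ).compl
  have hz : ∫⁻ x in Ω, m x (mClosure m Ω)ᶜ ∂ν = 0 := by
    rw [hrev Ω _ hΩ hB]
    have : ∀ x ∈ (mClosure m Ω)ᶜ, m x Ω = 0 := by
      intro x hx
      simp only [mClosure, mBoundary, Set.mem_compl_iff, Set.mem_union, Set.mem_setOf_eq,
        not_or, not_and, not_lt] at hx
      exact le_antisymm (hx.2 hx.1) zero_le
    rw [setLIntegral_congr_fun hB this]
    simp
  have := (lintegral_eq_zero_iff' ((hm.2 _ hB).aemeasurable)).mp hz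
  filter_upwards [this] with x hx using hx

lemma survival_le_one (hm : IsRandomWalk m) (Ω : Set X) (n : ℕ) (x : X) :
    survival m Ω n x ≤ 1 := by
  induction n generalizing x with
  | zero => simp [survival]
  | succ n ih =>
    have h := hm.1 x
    calc survival m Ω (n+1) x = ∫⁻ y in Ω, survival m Ω n y ∂(m x) := rfl
      _ ≤ ∫⁻ _ in Ω, 1 ∂(m x) := lintegral_mono fun y => ih y
      _ = m x Ω := by simp
      _ ≤ 1 := prob_le_one

end Aux

/-- if an eigenfunction associated to `λ_{m,2}(Ω)` is bounded between two
positive constants on `Ω`, then `λ_{m,2}(Ω) = 1 − lim_n (g_{m,Ω}(2n)/g_{m,Ω}(n))^{1/n}`. -/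
theorem eigenvalue_limit_formula {X : Type*} [MeasurableSpace X]
    (m : X → Measure X) (ν : Measure X) [SigmaFinite ν]
    (hm : RandomWalkSpace.IsRandomWalk m) (hrev : RandomWalkSpace.Reversible m ν)
    (Ω : Set X) (hΩ : MeasurableSet Ω)
    (hconn : RandomWalkSpace.mConnected m ν Ω)
    (hconnm : RandomWalkSpace.mConnected m ν (RandomWalkSpace.mClosure m Ω))
    (h0 : 0 < ν Ω) (h1 : ν Ω < ν (RandomWalkSpace.mClosure m Ω))
    (h2 : ν (RandomWalkSpace.mClosure m Ω) < ⊤)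
    (hpoinc : RandomWalkSpace.PoincareInequality m ν Ω 2)
    (lam : ℝ) (hlam0 : 0 ≤ lam)
    (hlam : ENNReal.ofReal lam = RandomWalkSpace.rayleigh m ν Ω 2)
    (f : X → ℝ) (hfLp : RandomWalkSpace.InLp0 m ν Ω 2 f)
    (hfeigen : ∀ᵐ x ∂ν.restrict Ω,
      -∫ y in RandomWalkSpace.mClosure m Ω, (f y - f x) ∂(m x) = lam * f x)
    (α α' : ℝ) (hα : 0 < α) (hαα' : α ≤ α')
    (hbound : ∀ᵐ x ∂ν.restrict Ω, α ≤ f x ∧ f x ≤ α') :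
    Filter.Tendsto
      (fun n : ℕ =>
        ((RandomWalkSpace.gseq m ν Ω (2 * n)).toReal /
            (RandomWalkSpace.gseq m ν Ω n).toReal) ^ ((n : ℝ)⁻¹))
      Filter.atTop (nhds (1 - lam)) := by
  classical
  have hprob : ∀ x, IsProbabilityMeasure (m x) := hm.1
  set Ωm := RandomWalkSpace.mClosure m Ω with hΩmdef
  have hΩmmeas : MeasurableSet Ωm := mClosure_meas m hm hΩ
  have hbd : MeasurableSet (RandomWalkSpace.mBoundary m Ω) := mBoundary_meas m hm hΩ
  obtain ⟨g, hg_sm, hfg⟩ := hfLp.1.aestronglyMeasurable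
  set q := 1 - lam with hqdef
  have key : ∀ᵐ x ∂ν.restrict Ω,
      (∫⁻ y in Ω, ENNReal.ofReal (f y) ∂(m x)) = ENNReal.ofReal (q * f x) ∧
      (∀ᵐ y ∂(m x), y ∈ Ω → α ≤ f y ∧ f y ≤ α') ∧ α ≤ f x ∧ f x ≤ α' ∧
      0 ≤ q * f x := by
    have t1 := ae_transfer m ν hm hrev hΩ hΩ hbound
    have t2 := ae_transfer m ν hm hrev hΩ hbd hfLp.2
    have t3 := ae_transfer m ν hm hrev hΩ hΩmmeas hfg
    have t4 := ae_mClosure_compl_null m ν hm hrev hΩ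
    filter_upwards [t1, t2, t3, t4, hfeigen, hbound] with x h1 h2 h3 h4 heig hbx
    have hmem : ∀ᵐ y ∂(m x), y ∈ Ωm := by
      filter_upwards [measure_eq_zero_iff_ae_notMem.mp h4] with y hy
      simpa using hy
    have hfg' : f =ᵐ[m x] g := by
      filter_upwards [h3, hmem] with y h hy using h hy
    have hsm : AEStronglyMeasurable f (m x) := ⟨g, hg_sm, hfg'⟩
    have hbnd : ∀ᵐ y ∂(m x), ‖f y‖ ≤ α' := by
      filter_upwards [h1, h2, hmem] with y hy1 hy2 hy3
      rcases hy3 with hyΩ | hybd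
      · have h := hy1 hyΩ
        rw [Real.norm_eq_abs, abs_le]
        exact ⟨by linarith, h.2⟩
      · rw [hy2 hybd, norm_zero]; linarith
    have hint : Integrable f (m x) := (integrable_const α').mono' hsm hbnd
    have hμΩm : m x Ωm = 1 := by
      have hc := measure_add_measure_compl (μ := m x) hΩmmeas
      rw [h4, add_zero, measure_univ] at hc
      exact hc
    have hsub : ∫ y in Ωm, (f y - f x) ∂(m x)
        = (∫ y in Ωm, f y ∂(m x)) - f x := by
      rw [integral_sub hint.integrableOn (integrable_const _), setIntegral_const]
      simp [measureReal_def, hμΩm]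
    have hsplit : ∫ y in Ωm, f y ∂(m x)
        = (∫ y in Ω, f y ∂(m x)) + ∫ y in RandomWalkSpace.mBoundary m Ω, f y ∂(m x) := by
      have hU : Ωm = Ω ∪ RandomWalkSpace.mBoundary m Ω := rfl
      rw [hU]
      exact setIntegral_union (Set.disjoint_left.mpr fun a ha hb => hb.1 ha) hbd
        hint.integrableOn hint.integrableOn
    have hbdzero : ∫ y in RandomWalkSpace.mBoundary m Ω, f y ∂(m x) = 0 := by
      apply integral_eq_zero_of_ae
      exact (ae_restrict_iff' hbd).mpr h2
    have hΩint : ∫ y in Ω, f y ∂(m x) = q * f x := by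
      rw [hsub, hsplit, hbdzero, add_zero] at heig
      rw [hqdef]; linarith
    have hnn : 0 ≤ᵐ[(m x).restrict Ω] f :=
      (ae_restrict_iff' hΩ).mpr (h1.mono fun y hy hyΩ => le_trans hα.le (hy hyΩ).1)
    refine ⟨?_, h1, hbx.1, hbx.2, ?_⟩
    · rw [← hΩint]
      exact (ofReal_integral_eq_lintegral_ofReal hint.integrableOn hnn).symm
    · rw [← hΩint]
      exact integral_nonneg_of_ae hnn
  have hres_ne : ν.restrict Ω ≠ 0 := by
    intro h
    have hz : ν Ω = 0 := by
      have := congrArg (fun μ : Measure X => μ Set.univ) h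
      simpa [Measure.restrict_apply_univ] using this
    exact h0.ne' hz
  haveI : (ae (ν.restrict Ω)).NeBot := ae_neBot.mpr hres_ne
  obtain ⟨x0, hx0⟩ := key.exists
  have hq : 0 ≤ q := by
    have h5 := hx0.2.2.2.2
    have hfx0 : 0 < f x0 := lt_of_lt_of_le hα hx0.2.2.1
    by_contra hcon
    push_neg at hcon
    nlinarith
  have main : ∀ n : ℕ, ∀ᵐ x ∂ν.restrict Ω,
      ENNReal.ofReal α * RandomWalkSpace.survival m Ω n x ≤ ENNReal.ofReal (q ^ n * f x) ∧
      ENNReal.ofReal (q ^ n * f x) ≤ ENNReal.ofReal α' * RandomWalkSpace.survival m Ω n x := by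
    intro n
    induction n with
    | zero =>
      filter_upwards [key] with x hx
      simp only [RandomWalkSpace.survival, pow_zero, one_mul, mul_one]
      exact ⟨ENNReal.ofReal_le_ofReal hx.2.2.1, ENNReal.ofReal_le_ofReal hx.2.2.2.1⟩
    | succ n ih =>
      have ihT := ae_transfer m ν hm hrev hΩ hΩ ih
      filter_upwards [key, ihT] with x hx hihx
      have hlin := hx.1
      have hres := (ae_restrict_iff' hΩ).mpr hihx
      have hs : RandomWalkSpace.survival m Ω (n+1) x
          = ∫⁻ y in Ω, RandomWalkSpace.survival m Ω n y ∂(m x) := rfl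
      constructor
      · rw [hs, ← lintegral_const_mul' _ _ ENNReal.ofReal_ne_top]
        calc (∫⁻ y in Ω, ENNReal.ofReal α * RandomWalkSpace.survival m Ω n y ∂(m x))
            ≤ ∫⁻ y in Ω, ENNReal.ofReal (q ^ n * f y) ∂(m x) :=
              lintegral_mono_ae (hres.mono fun y hy => hy.1)
          _ = ENNReal.ofReal (q ^ n) * ∫⁻ y in Ω, ENNReal.ofReal (f y) ∂(m x) := by
              simp_rw [ENNReal.ofReal_mul (pow_nonneg hq n)]
              exact lintegral_const_mul' _ _ ENNReal.ofReal_ne_top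
          _ = ENNReal.ofReal (q ^ n) * ENNReal.ofReal (q * f x) := by rw [hlin]
          _ = ENNReal.ofReal (q ^ (n+1) * f x) := by
              rw [← ENNReal.ofReal_mul (pow_nonneg hq n)]; ring_nf
      · rw [hs, ← lintegral_const_mul' _ _ ENNReal.ofReal_ne_top]
        calc ENNReal.ofReal (q ^ (n+1) * f x)
            = ENNReal.ofReal (q ^ n) * ENNReal.ofReal (q * f x) := by
              rw [← ENNReal.ofReal_mul (pow_nonneg hq n)]; ring_nf
          _ = ENNReal.ofReal (q ^ n) * ∫⁻ y in Ω, ENNReal.ofReal (f y) ∂(m x) := by rw [hlin]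
          _ = ∫⁻ y in Ω, ENNReal.ofReal (q ^ n * f y) ∂(m x) := by
              simp_rw [ENNReal.ofReal_mul (pow_nonneg hq n)]
              exact (lintegral_const_mul' _ _ ENNReal.ofReal_ne_top).symm
          _ ≤ ∫⁻ y in Ω, ENNReal.ofReal α' * RandomWalkSpace.survival m Ω n y ∂(m x) :=
              lintegral_mono_ae (hres.mono fun y hy => hy.2)
  set I := ∫⁻ x in Ω, ENNReal.ofReal (f x) ∂ν with hIdef
  have hνΩfin : ν Ω < ⊤ := lt_of_le_of_lt (measure_mono Set.subset_union_left) h2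
  have hIub : I ≤ ENNReal.ofReal α' * ν Ω := by
    calc I ≤ ∫⁻ _ in Ω, ENNReal.ofReal α' ∂ν :=
        lintegral_mono_ae (hbound.mono fun x hx => ENNReal.ofReal_le_ofReal hx.2)
      _ = ENNReal.ofReal α' * ν Ω := by
        rw [setLIntegral_const]
  have hIlb : ENNReal.ofReal α * ν Ω ≤ I := by
    calc ENNReal.ofReal α * ν Ω
        = ∫⁻ _ in Ω, ENNReal.ofReal α ∂ν := by rw [setLIntegral_const]
      _ ≤ I := lintegral_mono_ae (hbound.mono fun x hx => ENNReal.ofReal_le_ofReal hx.1)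
  have hIfin : I ≠ ⊤ :=
    ne_top_of_le_ne_top (ENNReal.mul_ne_top ENNReal.ofReal_ne_top hνΩfin.ne) hIub
  have hIpos : 0 < I :=
    lt_of_lt_of_le (ENNReal.mul_pos (ENNReal.ofReal_pos.mpr hα).ne' h0.ne') hIlb
  have hgub : ∀ n, ENNReal.ofReal α * RandomWalkSpace.gseq m ν Ω n
      ≤ ENNReal.ofReal (q ^ n) * I := by
    intro n
    calc ENNReal.ofReal α * RandomWalkSpace.gseq m ν Ω n
        = ∫⁻ x in Ω, ENNReal.ofReal α * RandomWalkSpace.survival m Ω n x ∂ν :=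
          (lintegral_const_mul' _ _ ENNReal.ofReal_ne_top).symm
      _ ≤ ∫⁻ x in Ω, ENNReal.ofReal (q ^ n * f x) ∂ν :=
          lintegral_mono_ae ((main n).mono fun x hx => hx.1)
      _ = ENNReal.ofReal (q ^ n) * I := by
          simp_rw [ENNReal.ofReal_mul (pow_nonneg hq n)]
          exact lintegral_const_mul' _ _ ENNReal.ofReal_ne_top
  have hglb : ∀ n, ENNReal.ofReal (q ^ n) * I
      ≤ ENNReal.ofReal α' * RandomWalkSpace.gseq m ν Ω n := by
    intro n
    calc ENNReal.ofReal (q ^ n) * I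
        = ∫⁻ x in Ω, ENNReal.ofReal (q ^ n * f x) ∂ν := by
          simp_rw [ENNReal.ofReal_mul (pow_nonneg hq n)]
          exact (lintegral_const_mul' _ _ ENNReal.ofReal_ne_top).symm
      _ ≤ ∫⁻ x in Ω, ENNReal.ofReal α' * RandomWalkSpace.survival m Ω n x ∂ν :=
          lintegral_mono_ae ((main n).mono fun x hx => hx.2)
      _ = ENNReal.ofReal α' * RandomWalkSpace.gseq m ν Ω n :=
          lintegral_const_mul' _ _ ENNReal.ofReal_ne_top
  have hgfin : ∀ n, RandomWalkSpace.gseq m ν Ω n ≠ ⊤ := by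
    intro n
    refine ne_top_of_le_ne_top hνΩfin.ne ?_
    calc RandomWalkSpace.gseq m ν Ω n
        ≤ ∫⁻ _ in Ω, 1 ∂ν := lintegral_mono fun x => survival_le_one m hm Ω n x
      _ = ν Ω := by rw [setLIntegral_const, one_mul]
  rcases eq_or_lt_of_le hq with hq0 | hqpos
  · -- q = 0
    have hgz : ∀ n : ℕ, 1 ≤ n → RandomWalkSpace.gseq m ν Ω n = 0 := by
      intro n hn
      have h := hgub n
      rw [← hq0, zero_pow (by omega), ENNReal.ofReal_zero, zero_mul] at h
      rcases mul_eq_zero.mp (le_zero_iff.mp h) with hcase | hcase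
      · exact absurd hcase (ENNReal.ofReal_pos.mpr hα).ne'
      · exact hcase
    have hev : ∀ᶠ n : ℕ in atTop, (0:ℝ)
        = ((RandomWalkSpace.gseq m ν Ω (2 * n)).toReal /
            (RandomWalkSpace.gseq m ν Ω n).toReal) ^ ((n : ℝ)⁻¹) := by
      filter_upwards [eventually_ge_atTop 1] with n hn
      rw [hgz n hn, hgz (2 * n) (by omega)]
      have hn0 : ((n : ℝ)) ≠ 0 := Nat.cast_ne_zero.mpr (by omega)
      simp [Real.zero_rpow (inv_ne_zero hn0)]
    refine Tendsto.congr' hev ?_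
    rw [← hq0]
    exact tendsto_const_nhds
  · -- 0 < q
    have hα' : 0 < α' := lt_of_lt_of_le hα hαα'
    have hIr : 0 < I.toReal := ENNReal.toReal_pos hIpos.ne' hIfin
    have hub : ∀ n, α * (RandomWalkSpace.gseq m ν Ω n).toReal ≤ q ^ n * I.toReal := by
      intro n
      have h := ENNReal.toReal_mono (ENNReal.mul_ne_top ENNReal.ofReal_ne_top hIfin) (hgub n)
      rwa [ENNReal.toReal_mul, ENNReal.toReal_mul, ENNReal.toReal_ofReal hα.le,
        ENNReal.toReal_ofReal (pow_nonneg hq n)] at h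
    have hlb : ∀ n, q ^ n * I.toReal ≤ α' * (RandomWalkSpace.gseq m ν Ω n).toReal := by
      intro n
      have h := ENNReal.toReal_mono
        (ENNReal.mul_ne_top ENNReal.ofReal_ne_top (hgfin n)) (hglb n)
      rwa [ENNReal.toReal_mul, ENNReal.toReal_mul, ENNReal.toReal_ofReal hα'.le,
        ENNReal.toReal_ofReal (pow_nonneg hq n)] at h
    have hgpos : ∀ n, 0 < (RandomWalkSpace.gseq m ν Ω n).toReal := by
      intro n
      have h := hlb n
      nlinarith [pow_pos hqpos n, hIr]
    have hratio_lb : ∀ n : ℕ, q ^ n * (α / α')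
        ≤ (RandomWalkSpace.gseq m ν Ω (2 * n)).toReal /
            (RandomWalkSpace.gseq m ν Ω n).toReal := by
      intro n
      have hr1 : q ^ (2 * n) * I.toReal / α' ≤ (RandomWalkSpace.gseq m ν Ω (2 * n)).toReal := by
        rw [div_le_iff₀ hα']
        have := hlb (2 * n); linarith
      have hr2 : (RandomWalkSpace.gseq m ν Ω n).toReal ≤ q ^ n * I.toReal / α := by
        rw [le_div_iff₀ hα]
        have := hub n; linarith
      calc q ^ n * (α / α')
          = (q ^ (2 * n) * I.toReal / α') / (q ^ n * I.toReal / α) := by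
            rw [two_mul, pow_add]
            field_simp
        _ ≤ _ := div_le_div₀ (hgpos (2 * n)).le hr1 (hgpos n) hr2
    have hratio_ub : ∀ n : ℕ,
        (RandomWalkSpace.gseq m ν Ω (2 * n)).toReal /
            (RandomWalkSpace.gseq m ν Ω n).toReal ≤ q ^ n * (α' / α) := by
      intro n
      have hr1 : (RandomWalkSpace.gseq m ν Ω (2 * n)).toReal ≤ q ^ (2 * n) * I.toReal / α := by
        rw [le_div_iff₀ hα]
        have := hub (2 * n); linarith
      have hr2 : q ^ n * I.toReal / α' ≤ (RandomWalkSpace.gseq m ν Ω n).toReal := by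
        rw [div_le_iff₀ hα']
        have := hlb n; linarith
      calc (RandomWalkSpace.gseq m ν Ω (2 * n)).toReal /
              (RandomWalkSpace.gseq m ν Ω n).toReal
          ≤ (q ^ (2 * n) * I.toReal / α) / (q ^ n * I.toReal / α') :=
            div_le_div₀ (le_of_lt (div_pos (mul_pos (pow_pos hqpos (2 * n)) hIr) hα)) hr1
              (div_pos (mul_pos (pow_pos hqpos n) hIr) hα') hr2
        _ = q ^ n * (α' / α) := by
            rw [two_mul, pow_add]
            field_simp
    have hlim : ∀ c : ℝ, 0 < c →
        Tendsto (fun n : ℕ => q * c ^ ((n : ℝ)⁻¹)) atTop (nhds q) := by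
      intro c hc
      have h1 : Tendsto (fun n : ℕ => ((n : ℝ))⁻¹) atTop (nhds 0) :=
        tendsto_inv_atTop_zero.comp tendsto_natCast_atTop_atTop
      have hcont : Continuous (fun x : ℝ => q * c ^ x) := by
        simp_rw [Real.rpow_def_of_pos hc]
        exact continuous_const.mul (Real.continuous_exp.comp (continuous_const.mul continuous_id))
      have h2 : Tendsto (fun x : ℝ => q * c ^ x) (nhds 0) (nhds q) := by
        have := hcont.tendsto 0
        simpa [Real.rpow_zero] using this
      exact h2.comp h1
    have hgoal : Tendsto
        (fun n : ℕ =>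
          ((RandomWalkSpace.gseq m ν Ω (2 * n)).toReal /
              (RandomWalkSpace.gseq m ν Ω n).toReal) ^ ((n : ℝ)⁻¹))
        atTop (nhds q) := by
      refine tendsto_of_tendsto_of_tendsto_of_le_of_le'
        (hlim (α / α') (by positivity)) (hlim (α' / α) (by positivity)) ?_ ?_
      · filter_upwards [eventually_ge_atTop 1] with n hn
        have hn0 : n ≠ 0 := by omega
        have h := Real.rpow_le_rpow (by positivity) (hratio_lb n)
          (inv_nonneg.mpr (Nat.cast_nonneg n))
        rwa [Real.mul_rpow (pow_nonneg hq n) (by positivity),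
          Real.pow_rpow_inv_natCast hq hn0] at h
      · filter_upwards [eventually_ge_atTop 1] with n hn
        have hn0 : n ≠ 0 := by omega
        have h := Real.rpow_le_rpow (by positivity) (hratio_ub n)
          (inv_nonneg.mpr (Nat.cast_nonneg n))
        rwa [Real.mul_rpow (pow_nonneg hq n) (by positivity),
          Real.pow_rpow_inv_natCast hq hn0] at h
    exact hgoal
end
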